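/- arXiv:2102.04917 — 4 statements merged into one kernel-verified Lean document; each statement's English description precedes it below -/
import Mathlib

section
/- Let R be a commutative ring with unity, S = R[x₁,…,x_k], M an S-module, and M̄ = (Mₙ)_{n∈ℕ} an increasing filtering of M with degrees γ̄ ∈ ℕᵏ. For m ∈ ℕ, let Mᵐ := ⊕_{n≤m} Mₙyⁿ ⊆ Rees(M̄). Then Mᵐ generates Rees(M̄) as an S[y]-module if and only if M_m tightly generates M̄, i.e. for every n ∈ ℕ and v ∈ Mₙ there exist m₁,…,m_r ≤ m, elements v_j ∈ M_{m_j}, and polynomials p₁,…,p_r ∈ S such that v = p₁v₁ + ⋯ + p_r v_r and n ≥ deg_γ(p_j) + m_j for each j. -/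
open scoped ENNReal

/-- A (generalized) length function on the category of `R`-modules, with values in
`ℝ≥0 ∪ {∞} = ℝ≥0∞`: it vanishes on the zero module, is invariant under isomorphism, is additive
on short exact sequences (equivalently, `λ(M) = λ(N) + λ(M/N)` for every submodule `N ≤ M`), and
is the supremum of its values on finitely generated submodules. -/
structure LengthFunction (R : Type) [CommRing R] : Type 1 where
  l : (M : Type) → [AddCommGroup M] → [Module R M] → ℝ≥0∞
  l_zero : ∀ (M : Type) [AddCommGroup M] [Module R M], Subsingleton M → l M = 0
  l_congr : ∀ (M N : Type) [AddCommGroup M] [Module R M] [AddCommGroup N] [Module R N],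
      (M ≃ₗ[R] N) → l M = l N
  l_add : ∀ (M : Type) [AddCommGroup M] [Module R M] (N : Submodule R M),
      l M = l N + l (M ⧸ N)
  l_fg_sup : ∀ (M : Type) [AddCommGroup M] [Module R M],
      l M = ⨆ (N : Submodule R M) (_ : N.FG), l N

/-- `Sₙ · V`: the `R`-submodule of `M` generated by the products `p • v` with `p ∈ Sₙ` (the
polynomials of total degree at most `n` in `S = R[x₁,…,x_k]`) and `v ∈ V`. -/
def degSmul {R : Type} [CommRing R] (k : ℕ) {M : Type} [AddCommGroup M] [Module R M]
    [Module (MvPolynomial (Fin k) R) M] [IsScalarTower R (MvPolynomial (Fin k) R) M]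
    (n : ℕ) (V : Submodule R M) : Submodule R M :=
  Submodule.span R
    {m : M | ∃ p ∈ MvPolynomial.restrictTotalDegree (Fin k) R n, ∃ v ∈ V, p • v = m}
/-- The ring homomorphism `S[y] → S[X]` (for `S = R[x₁,…,x_k]`) sending `y ↦ X` and
`xᵢ ↦ xᵢ·X^{γᵢ}`; it encodes the action on the blow-up (Rees) module: `xᵢ` acts with degree
`γᵢ` and `y` with degree `1`. -/
noncomputable def twist {R : Type} [CommRing R] {k : ℕ} (γ : Fin k → ℕ) :
    Polynomial (MvPolynomial (Fin k) R) →+* Polynomial (MvPolynomial (Fin k) R) :=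
  Polynomial.eval₂RingHom
    (MvPolynomial.eval₂Hom (Polynomial.C.comp MvPolynomial.C)
      (fun i => Polynomial.C (MvPolynomial.X i) * Polynomial.X ^ γ i))
    Polynomial.X

/-- Auxiliary lemma: the coefficients of `twist γ p` are compatible with any filtration `𝓜`
which is increasing and satisfies `xᵢ • 𝓜 n ⊆ 𝓜 (n + γᵢ)`. -/
theorem twist_coeff_smul_mem {R : Type} [CommRing R] {k : ℕ} {M : Type} [AddCommGroup M]
    [Module R M] [Module (MvPolynomial (Fin k) R) M]
    [IsScalarTower R (MvPolynomial (Fin k) R) M]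
    (γ : Fin k → ℕ) (𝓜 : ℕ → Submodule R M) (hmono : Monotone 𝓜)
    (hx : ∀ (i : Fin k) (n : ℕ), ∀ m ∈ 𝓜 n,
      (MvPolynomial.X i : MvPolynomial (Fin k) R) • m ∈ 𝓜 (n + γ i))
    (p : Polynomial (MvPolynomial (Fin k) R)) :
    ∀ a b : ℕ, ∀ m ∈ 𝓜 b, ((twist γ p).coeff a) • m ∈ 𝓜 (a + b) := by
  classical
  set S := MvPolynomial (Fin k) R
  set T : Set (Polynomial S) :=
    {q | ∀ a b : ℕ, ∀ m ∈ 𝓜 b, (q.coeff a) • m ∈ 𝓜 (a + b)} with hT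
  have hadd : ∀ q q' : Polynomial S, q ∈ T → q' ∈ T → q + q' ∈ T := by
    intro q q' hq hq' a b m hm
    rw [Polynomial.coeff_add, add_smul]
    exact (𝓜 (a + b)).add_mem (hq a b m hm) (hq' a b m hm)
  have hmul : ∀ q q' : Polynomial S, q ∈ T → q' ∈ T → q * q' ∈ T := by
    intro q q' hq hq' a b m hm
    rw [Polynomial.coeff_mul, Finset.sum_smul]
    refine Submodule.sum_mem _ ?_
    intro x hxmem
    rw [mul_smul]
    have h1 : q'.coeff x.2 • m ∈ 𝓜 (x.2 + b) := hq' x.2 b m hm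
    have h2 := hq x.1 (x.2 + b) _ h1
    rw [Finset.HasAntidiagonal.mem_antidiagonal] at hxmem
    rwa [← add_assoc, hxmem] at h2
  have hCC : ∀ r : R, (Polynomial.C (MvPolynomial.C r : S)) ∈ T := by
    intro r a b m hm
    rcases Nat.eq_zero_or_pos a with rfl | ha
    · rw [Polynomial.coeff_C_zero]
      have : (MvPolynomial.C r : S) • m = r • m := by
        rw [← MvPolynomial.algebraMap_eq, algebraMap_smul]
      rw [this, zero_add]
      exact (𝓜 b).smul_mem r hm
    · rw [Polynomial.coeff_C, if_neg (by omega), zero_smul]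
      exact (𝓜 (a + b)).zero_mem
  have hX : (Polynomial.X : Polynomial S) ∈ T := by
    intro a b m hm
    rw [Polynomial.coeff_X]
    by_cases h : (1 : ℕ) = a
    · rw [if_pos h, one_smul]
      exact hmono (by omega) hm
    · rw [if_neg h, zero_smul]
      exact (𝓜 (a + b)).zero_mem
  have hXi : ∀ i : Fin k, (Polynomial.C (MvPolynomial.X i : S) * Polynomial.X ^ γ i) ∈ T := by
    intro i a b m hm
    rw [Polynomial.coeff_C_mul, Polynomial.coeff_X_pow]
    by_cases h : a = γ i
    · rw [if_pos h, mul_one]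
      have := hx i b m hm
      rwa [h, add_comm]
    · rw [if_neg h, mul_zero, zero_smul]
      exact (𝓜 (a + b)).zero_mem
  have hinner : ∀ s : S,
      (MvPolynomial.eval₂Hom (Polynomial.C.comp MvPolynomial.C)
        (fun i => Polynomial.C (MvPolynomial.X i) * Polynomial.X ^ γ i) s) ∈ T := by
    intro s
    induction s using MvPolynomial.induction_on with
    | C r => simpa using hCC r
    | add s s' hs hs' => rw [map_add]; exact hadd _ _ hs hs'
    | mul_X s i hs =>
        rw [map_mul]
        refine hmul _ _ hs ?_
        simpa using hXi i
  suffices h : twist γ p ∈ T by exact h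
  induction p using Polynomial.induction_on with
  | C s =>
      show Polynomial.eval₂ _ _ (Polynomial.C s) ∈ T
      rw [Polynomial.eval₂_C]
      exact hinner s
  | add q q' hq hq' =>
      rw [map_add]; exact hadd _ _ hq hq'
  | monomial n s hq =>
      have : (Polynomial.C s * Polynomial.X ^ (n + 1)) =
          (Polynomial.C s * Polynomial.X ^ n) * Polynomial.X := by ring
      rw [this, map_mul]
      refine hmul _ _ hq ?_
      show Polynomial.eval₂ _ _ Polynomial.X ∈ T
      rw [Polynomial.eval₂_X]
      exact hX

/-- The ambient module `⊕ₙ M yⁿ` of the blow-up construction: the polynomial module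
`M[y] = ⊕ₙ M yⁿ` over `S = R[x₁,…,x_k]`, regarded as an `S[y]`-module through `twist γ`, so
that `xᵢ • (v yʲ) = (xᵢ v) y^{j+γᵢ}` and `y • (v yʲ) = v y^{j+1}`. -/
def ReesAmb (R : Type) [CommRing R] {k : ℕ} (_γ : Fin k → ℕ) (M : Type) [AddCommGroup M]
    [Module R M] [Module (MvPolynomial (Fin k) R) M] : Type :=
  PolynomialModule (MvPolynomial (Fin k) R) M

section Rees
variable {R : Type} [CommRing R] {k : ℕ} {M : Type} [AddCommGroup M] [Module R M]
  [Module (MvPolynomial (Fin k) R) M] [IsScalarTower R (MvPolynomial (Fin k) R) M]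

noncomputable instance (γ : Fin k → ℕ) : AddCommGroup (ReesAmb R γ M) :=
  inferInstanceAs (AddCommGroup (PolynomialModule (MvPolynomial (Fin k) R) M))

/-- The twisted `S[y]`-module structure on `⊕ₙ M yⁿ`. -/
noncomputable instance (γ : Fin k → ℕ) :
    Module (Polynomial (MvPolynomial (Fin k) R)) (ReesAmb R γ M) :=
  Module.compHom (PolynomialModule (MvPolynomial (Fin k) R) M) (twist γ)

noncomputable instance (γ : Fin k → ℕ) : Module R (ReesAmb R γ M) :=
  inferInstanceAs (Module R (PolynomialModule (MvPolynomial (Fin k) R) M))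

/-- The underlying finitely supported function `ℕ →₀ M` of an element of `ReesAmb R γ M`;
`ReesAmb.coe f n` is the coefficient of `yⁿ` in `f`. -/
def ReesAmb.coe {γ : Fin k → ℕ} (f : ReesAmb R γ M) : ℕ →₀ M := PolynomialModule.coeff f

/-- The blow-up (Rees) module `Rees(M̄) = ⊕ₙ Mₙ yⁿ` of an increasing filtering `M̄ = (Mₙ)ₙ`
with degrees `γ̄`: the `S[y]`-submodule of `ReesAmb R γ M` consisting of the elements whose
`n`-th coefficient lies in `Mₙ` for every `n`. -/
noncomputable def reesSubmodule (γ : Fin k → ℕ) (𝓜 : ℕ → Submodule R M)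
    (hmono : Monotone 𝓜)
    (hx : ∀ (i : Fin k) (n : ℕ), ∀ m ∈ 𝓜 n,
      (MvPolynomial.X i : MvPolynomial (Fin k) R) • m ∈ 𝓜 (n + γ i)) :
    Submodule (Polynomial (MvPolynomial (Fin k) R)) (ReesAmb R γ M) where
  carrier := {f | ∀ n, ReesAmb.coe f n ∈ 𝓜 n}
  zero_mem' := by intro n; exact (𝓜 n).zero_mem
  add_mem' := by
    intro f g hf hg n
    exact (𝓜 n).add_mem (hf n) (hg n)
  smul_mem' := by
    intro p f hf n
    let g : PolynomialModule (MvPolynomial (Fin k) R) M := f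
    have h : ((twist γ p) • g).coeff n ∈ 𝓜 n := by
      rw [PolynomialModule.smul_apply]
      refine Submodule.sum_mem _ ?_
      intro x hxmem
      rw [Finset.HasAntidiagonal.mem_antidiagonal] at hxmem
      have hmem := twist_coeff_smul_mem γ 𝓜 hmono hx p x.1 x.2 (g.coeff x.2) (hf x.2)
      rwa [hxmem] at hmem
    exact h

/-- The `n`-th graded piece `Mₙ yⁿ` of the blow-up module. -/
noncomputable def gradedPiece (γ : Fin k → ℕ) (𝓜 : ℕ → Submodule R M) (n : ℕ) :
    Submodule R (ReesAmb R γ M) :=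
  (𝓜 n).map (((PolynomialModule.coeffLinearEquiv (MvPolynomial (Fin k) R) R).symm.toLinearMap.comp
    (Finsupp.lsingle n : M →ₗ[R] (ℕ →₀ M))) : M →ₗ[R] ReesAmb R γ M)

end Rees

section Aux

variable {R : Type} [CommRing R] {k : ℕ}

/-- The `R`-submodule of polynomials all of whose monomials have `γ`-degree at most `n`. -/
def gammaDegSub (γ : Fin k → ℕ) (n : ℕ) : Submodule R (MvPolynomial (Fin k) R) where
  carrier := {p | ∀ d ∈ p.support, (∑ i, d i * γ i) ≤ n}
  zero_mem' := by intro d hd; simp at hd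
  add_mem' := by
    intro p q hp hq d hd
    rcases Finset.mem_union.mp (MvPolynomial.support_add hd) with h | h
    exacts [hp d h, hq d h]
  smul_mem' := by
    intro r p hp d hd
    exact hp d (MvPolynomial.support_smul hd)

theorem gammaDegSub_mono (γ : Fin k → ℕ) : Monotone (gammaDegSub (R := R) γ) := by
  intro a b hab p hp d hd
  exact le_trans (hp d hd) hab

theorem gammaDegSub_hx (γ : Fin k → ℕ) (i : Fin k) (n : ℕ) :
    ∀ p ∈ gammaDegSub (R := R) γ n,
      (MvPolynomial.X i : MvPolynomial (Fin k) R) • p ∈ gammaDegSub γ (n + γ i) := by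
  intro p hp d hd
  rw [smul_eq_mul] at hd
  have h := MvPolynomial.support_mul _ _ hd
  rw [Finset.mem_add] at h
  obtain ⟨d₁, hd₁, d₂, hd₂, rfl⟩ := h
  have hd₁' : d₁ = Finsupp.single i 1 := by
    have h2 : d₁ ∈ ({Finsupp.single i 1} : Finset (Fin k →₀ ℕ)) := by
      rw [MvPolynomial.X] at hd₁
      exact MvPolynomial.support_monomial_subset hd₁
    simpa using h2
  subst hd₁'
  have hd2 := hp d₂ hd₂
  show (∑ j, ((Finsupp.single i 1 + d₂ : Fin k →₀ ℕ)) j * γ j) ≤ n + γ i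
  simp only [Finsupp.add_apply, Finsupp.single_apply, add_mul, Finset.sum_add_distrib]
  have hsing : (∑ j, (if i = j then 1 else 0) * γ j) = γ i := by
    rw [Finset.sum_eq_single i]
    · simp
    · intro b _ hb
      rw [if_neg (fun h => hb h.symm), zero_mul]
    · simp
  rw [hsing]
  omega

theorem twist_coeff_gamma (γ : Fin k → ℕ) (q : Polynomial (MvPolynomial (Fin k) R)) (a : ℕ) :
    ∀ d ∈ ((twist γ q).coeff a).support, (∑ i, d i * γ i) ≤ a := by
  have h := twist_coeff_smul_mem (M := MvPolynomial (Fin k) R) γ (gammaDegSub γ)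
    (gammaDegSub_mono γ) (gammaDegSub_hx γ) q a 0 1 (by
      intro d hd
      have h1 : (1 : MvPolynomial (Fin k) R) = MvPolynomial.monomial 0 1 := by
        simp
      have h2 : d ∈ ({(0 : Fin k →₀ ℕ)} : Finset (Fin k →₀ ℕ)) := by
        rw [h1] at hd
        exact MvPolynomial.support_monomial_subset hd
      have : d = 0 := by simpa using h2
      simp [this])
  have h2 : ((twist γ q).coeff a) ∈ gammaDegSub (R := R) γ a := by
    simpa [smul_eq_mul] using h
  exact h2

/-- `twist γ` sends the monomial `x^d y^e` to `x^d y^(e + deg_γ d)`. -/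
theorem twist_monomial (γ : Fin k → ℕ) (e : ℕ) (d : Fin k →₀ ℕ) (c : R) :
    twist γ (Polynomial.monomial e (MvPolynomial.monomial d c))
      = Polynomial.monomial ((∑ i, d i * γ i) + e) (MvPolynomial.monomial d c) := by
  have hinner : ∀ (d : Fin k →₀ ℕ) (c : R),
      (MvPolynomial.eval₂Hom (Polynomial.C.comp MvPolynomial.C)
        (fun i => Polynomial.C (MvPolynomial.X i) * Polynomial.X ^ γ i))
        (MvPolynomial.monomial d c)
      = Polynomial.monomial (∑ i, d i * γ i) (MvPolynomial.monomial d c) := by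
    intro d
    induction d using Finsupp.induction with
    | zero =>
        intro c
        simp [MvPolynomial.monomial_zero']
    | single_add i b f hif hb ih =>
        intro c
        have hsum : (∑ j, ((Finsupp.single i b + f : Fin k →₀ ℕ)) j * γ j)
            = γ i * b + ∑ j, f j * γ j := by
          simp only [Finsupp.add_apply, Finsupp.single_apply, add_mul,
            Finset.sum_add_distrib]
          congr 1
          rw [Finset.sum_eq_single i]
          · simp [mul_comm]
          · intro j _ hj
            rw [if_neg (fun h => hj h.symm), zero_mul]
          · simp
        rw [MvPolynomial.monomial_single_add, map_mul, map_pow,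
          MvPolynomial.eval₂Hom_X', ih c, hsum]
        have hXib : (Polynomial.C (MvPolynomial.X i : MvPolynomial (Fin k) R)
            * Polynomial.X ^ γ i) ^ b
            = Polynomial.monomial (γ i * b) ((MvPolynomial.X i : MvPolynomial (Fin k) R) ^ b) := by
          rw [Polynomial.C_mul_X_pow_eq_monomial, Polynomial.monomial_pow]
        rw [hXib, Polynomial.monomial_mul_monomial, ← MvPolynomial.monomial_single_add]
  show Polynomial.eval₂ _ _ _ = _
  rw [Polynomial.eval₂_monomial, hinner, Polynomial.X_pow_eq_monomial,
    Polynomial.monomial_mul_monomial, mul_one]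

set_option linter.unusedSectionVars false

variable {M : Type} [AddCommGroup M] [Module R M]
  [Module (MvPolynomial (Fin k) R) M] [IsScalarTower R (MvPolynomial (Fin k) R) M]

/-- The identity map `M[y] → ⊕ₙ M yⁿ`, used to transport along the (definitional) equality of
the underlying types. -/
def toRees (γ : Fin k → ℕ) (g : PolynomialModule (MvPolynomial (Fin k) R) M) :
    ReesAmb R γ M := g

theorem smul_toRees (γ : Fin k → ℕ) (p : Polynomial (MvPolynomial (Fin k) R))
    (g : PolynomialModule (MvPolynomial (Fin k) R) M) :
    p • (toRees γ g) = toRees γ ((twist γ p) • g) := rfl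

theorem C_C_smul_toRees (γ : Fin k → ℕ) (r : R)
    (g : PolynomialModule (MvPolynomial (Fin k) R) M) :
    (Polynomial.C (MvPolynomial.C r) : Polynomial (MvPolynomial (Fin k) R)) • (toRees γ g)
      = r • (toRees γ g) := by
  rw [smul_toRees]
  have h1 : twist γ (Polynomial.C (MvPolynomial.C r))
      = Polynomial.C (MvPolynomial.C r) := by
    show Polynomial.eval₂ _ _ _ = _
    rw [Polynomial.eval₂_C, MvPolynomial.eval₂Hom_C]
    rfl
  have h2 : (Polynomial.C (MvPolynomial.C r) : Polynomial (MvPolynomial (Fin k) R)) • g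
      = r • g := by
    rw [← Polynomial.algebraMap_eq, algebraMap_smul, ← MvPolynomial.algebraMap_eq,
      algebraMap_smul]
  rw [h1, h2]
  rfl

/-- The generating set for the "tight generation" condition. -/
def genSet (γ : Fin k → ℕ) (𝓜 : ℕ → Submodule R M) (m n : ℕ) : Set M :=
  {w | ∃ m' ≤ m, ∃ p : MvPolynomial (Fin k) R,
    (∀ d ∈ p.support, (∑ i, d i * γ i) + m' ≤ n) ∧ ∃ u ∈ 𝓜 m', p • u = w}

theorem smul_span_genSet (γ : Fin k → ℕ) (𝓜 : ℕ → Submodule R M) (m : ℕ) {a b : ℕ}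
    {p : MvPolynomial (Fin k) R} (hp : ∀ d ∈ p.support, (∑ i, d i * γ i) ≤ a) {w : M}
    (hw : w ∈ Submodule.span R (genSet γ 𝓜 m b)) :
    p • w ∈ Submodule.span R (genSet γ 𝓜 m (a + b)) := by
  classical
  induction hw using Submodule.span_induction with
  | mem w hw =>
      obtain ⟨m', hm', p', hp', u, hu, rfl⟩ := hw
      rw [← mul_smul]
      refine Submodule.subset_span ⟨m', hm', p * p', ?_, u, hu, rfl⟩
      intro d hd
      have h := MvPolynomial.support_mul _ _ hd
      rw [Finset.mem_add] at h
      obtain ⟨d₁, hd₁, d₂, hd₂, rfl⟩ := h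
      have h1 := hp d₁ hd₁
      have h2 := hp' d₂ hd₂
      have hsplit : ∀ i : Fin k, (d₁ + d₂ : Fin k →₀ ℕ) i * γ i = d₁ i * γ i + d₂ i * γ i :=
        fun i => by rw [Finsupp.add_apply, add_mul]
      rw [Finset.sum_congr rfl fun i _ => hsplit i, Finset.sum_add_distrib]
      omega
  | zero => rw [smul_zero]; exact zero_mem _
  | add x y _ _ hx hy => rw [smul_add]; exact add_mem hx hy
  | smul r x _ hx =>
      rw [smul_comm]
      exact Submodule.smul_mem _ r hx

theorem mem_span_genSet_iff (γ : Fin k → ℕ) (𝓜 : ℕ → Submodule R M) (m n : ℕ) (v : M) :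
    v ∈ Submodule.span R (genSet γ 𝓜 m n) ↔
      ∃ (r : ℕ) (ms : Fin r → ℕ) (vs : Fin r → M) (ps : Fin r → MvPolynomial (Fin k) R),
        (∀ j, ms j ≤ m) ∧ (∀ j, vs j ∈ 𝓜 (ms j)) ∧
        (v = ∑ j, ps j • vs j) ∧
        (∀ j, ∀ d ∈ (ps j).support, (∑ i, d i * γ i) + ms j ≤ n) := by
  constructor
  · intro hv
    rw [Submodule.mem_span_set'] at hv
    obtain ⟨r, c, g, hsum⟩ := hv
    choose ms hms ps hps vs hvs hpv using fun j => (g j).2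
    refine ⟨r, ms, vs, fun j => c j • ps j, hms, hvs, ?_, ?_⟩
    · rw [← hsum]
      refine Finset.sum_congr rfl fun j _ => ?_
      rw [smul_assoc, hpv]
    · intro j d hd
      exact hps j d (MvPolynomial.support_smul hd)
  · rintro ⟨r, ms, vs, ps, hms, hvs, rfl, hdeg⟩
    exact Submodule.sum_mem _ fun j _ =>
      Submodule.subset_span ⟨ms j, hms j, ps j, hdeg j, vs j, hvs j, rfl⟩

theorem coe_smul_apply (γ : Fin k → ℕ) (q : Polynomial (MvPolynomial (Fin k) R))
    (g : PolynomialModule (MvPolynomial (Fin k) R) M) (b : ℕ) :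
    ReesAmb.coe (q • toRees γ g) b
      = ∑ x ∈ Finset.HasAntidiagonal.antidiagonal b, (twist γ q).coeff x.1 • g.coeff x.2 := by
  rw [smul_toRees]
  exact PolynomialModule.smul_apply _ _ _

theorem single_mem_rees (γ : Fin k → ℕ) (𝓜 : ℕ → Submodule R M) (hmono : Monotone 𝓜)
    (hx : ∀ (i : Fin k) (n : ℕ), ∀ m ∈ 𝓜 n,
      (MvPolynomial.X i : MvPolynomial (Fin k) R) • m ∈ 𝓜 (n + γ i))
    (b : ℕ) (v : M) (hv : v ∈ 𝓜 b) :
    toRees γ (PolynomialModule.single (MvPolynomial (Fin k) R) b v)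
      ∈ reesSubmodule γ 𝓜 hmono hx := by
  intro n'
  show (Finsupp.single b v : ℕ →₀ M) n' ∈ 𝓜 n'
  rw [Finsupp.single_apply]
  split_ifs with h
  · exact h ▸ hv
  · exact zero_mem _

theorem span_genSet_forward (γ : Fin k → ℕ) (𝓜 : ℕ → Submodule R M) (hmono : Monotone 𝓜)
    (hx : ∀ (i : Fin k) (n : ℕ), ∀ m ∈ 𝓜 n,
      (MvPolynomial.X i : MvPolynomial (Fin k) R) • m ∈ 𝓜 (n + γ i))
    (m : ℕ)
    (hsp : Submodule.span (Polynomial (MvPolynomial (Fin k) R))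
        {f : reesSubmodule γ 𝓜 hmono hx | ∀ n, m < n → ReesAmb.coe (f : ReesAmb R γ M) n = 0}
        = ⊤) :
    ∀ (n : ℕ), ∀ v ∈ 𝓜 n, v ∈ Submodule.span R (genSet γ 𝓜 m n) := by
  intro n v hv
  set e : reesSubmodule γ 𝓜 hmono hx :=
    ⟨toRees γ (PolynomialModule.single (MvPolynomial (Fin k) R) n v),
      single_mem_rees γ 𝓜 hmono hx n v hv⟩ with he_def
  have he : e ∈ Submodule.span (Polynomial (MvPolynomial (Fin k) R))
      {f : reesSubmodule γ 𝓜 hmono hx | ∀ n, m < n → ReesAmb.coe (f : ReesAmb R γ M) n = 0} := by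
    rw [hsp]; trivial
  have key : ∀ g : reesSubmodule γ 𝓜 hmono hx,
      g ∈ Submodule.span (Polynomial (MvPolynomial (Fin k) R))
        {f : reesSubmodule γ 𝓜 hmono hx | ∀ n, m < n → ReesAmb.coe (f : ReesAmb R γ M) n = 0} →
      ∀ b, ReesAmb.coe (g : ReesAmb R γ M) b ∈ Submodule.span R (genSet γ 𝓜 m b) := by
    intro g hg
    induction hg using Submodule.span_induction with
    | mem f hfT =>
        intro b
        by_cases hb : m < b
        · rw [hfT b hb]; exact zero_mem _
        · refine Submodule.subset_span
            ⟨b, (by omega), 1, ?_, ReesAmb.coe (f : ReesAmb R γ M) b, f.2 b, one_smul _ _⟩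
          intro d hd
          have h1 : (1 : MvPolynomial (Fin k) R) = MvPolynomial.monomial 0 1 := by simp
          have h2 : d ∈ ({(0 : Fin k →₀ ℕ)} : Finset (Fin k →₀ ℕ)) := by
            rw [h1] at hd
            exact MvPolynomial.support_monomial_subset hd
          have hd0 : d = 0 := by simpa using h2
          simp [hd0]
    | zero =>
        intro b
        show (0 : ℕ →₀ M) b ∈ _
        rw [Finsupp.zero_apply]
        exact zero_mem _
    | add x y _ _ hx' hy' =>
        intro b
        have : ReesAmb.coe ((x + y : reesSubmodule γ 𝓜 hmono hx) : ReesAmb R γ M) b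
            = ReesAmb.coe (x : ReesAmb R γ M) b + ReesAmb.coe (y : ReesAmb R γ M) b := rfl
        rw [this]
        exact add_mem (hx' b) (hy' b)
    | smul q f _ hf' =>
        intro b
        have hqf : ReesAmb.coe ((q • f : reesSubmodule γ 𝓜 hmono hx) : ReesAmb R γ M) b
            = ∑ x ∈ Finset.HasAntidiagonal.antidiagonal b,
                (twist γ q).coeff x.1 • ReesAmb.coe (f : ReesAmb R γ M) x.2 :=
          coe_smul_apply γ q (f : ReesAmb R γ M) b
        rw [hqf]
        refine Submodule.sum_mem _ fun x hx' => ?_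
        rw [Finset.HasAntidiagonal.mem_antidiagonal] at hx'
        have := smul_span_genSet γ 𝓜 m (twist_coeff_gamma γ q x.1) (hf' x.2)
        rwa [hx'] at this
  have hco : ReesAmb.coe (e : ReesAmb R γ M) n = v := by
    show (Finsupp.single n v : ℕ →₀ M) n = v
    simp
  have := key e he n
  rwa [hco] at this

theorem span_genSet_backward (γ : Fin k → ℕ) (𝓜 : ℕ → Submodule R M) (hmono : Monotone 𝓜)
    (hx : ∀ (i : Fin k) (n : ℕ), ∀ m ∈ 𝓜 n,
      (MvPolynomial.X i : MvPolynomial (Fin k) R) • m ∈ 𝓜 (n + γ i))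
    (m : ℕ)
    (hgen : ∀ (n : ℕ), ∀ v ∈ 𝓜 n, v ∈ Submodule.span R (genSet γ 𝓜 m n)) :
    Submodule.span (Polynomial (MvPolynomial (Fin k) R))
        {f : reesSubmodule γ 𝓜 hmono hx | ∀ n, m < n → ReesAmb.coe (f : ReesAmb R γ M) n = 0}
        = ⊤ := by
  classical
  set SS := Polynomial (MvPolynomial (Fin k) R) with hSS
  set T : Set (reesSubmodule γ 𝓜 hmono hx) :=
    {f : reesSubmodule γ 𝓜 hmono hx | ∀ n, m < n → ReesAmb.coe (f : ReesAmb R γ M) n = 0}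
    with hT
  rw [Submodule.eq_top_iff']
  intro x
  set U : Submodule SS (ReesAmb R γ M) :=
    Submodule.map (reesSubmodule γ 𝓜 hmono hx).subtype (Submodule.span SS T) with hU
  have hsingle : ∀ (b : ℕ) (v : M), v ∈ 𝓜 b →
      toRees γ (PolynomialModule.single (MvPolynomial (Fin k) R) b v) ∈ U := by
    intro b v hv
    have hv' := hgen b v hv
    have key : ∀ w : M, w ∈ Submodule.span R (genSet γ 𝓜 m b) →
        toRees γ (PolynomialModule.single (MvPolynomial (Fin k) R) b w) ∈ U := by
      intro w hw
      induction hw using Submodule.span_induction with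
      | mem w hwgen =>
          obtain ⟨m', hm', p, hp, u, hu, rfl⟩ := hwgen
          by_cases hp0 : p = 0
          · subst hp0
            rw [zero_smul]
            have h0 : PolynomialModule.single (MvPolynomial (Fin k) R) b (0 : M) = 0 :=
              PolynomialModule.single_zero _
            rw [h0]
            exact zero_mem _
          · have hm'b : m' ≤ b := by
              obtain ⟨d, hd⟩ := (MvPolynomial.support_nonempty.mpr hp0)
              have := hp d hd
              omega
            set t : reesSubmodule γ 𝓜 hmono hx :=
              ⟨toRees γ (PolynomialModule.single (MvPolynomial (Fin k) R) m' u),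
                single_mem_rees γ 𝓜 hmono hx m' u hu⟩ with ht_def
            have htT : t ∈ T := by
              intro n' hn'
              show (Finsupp.single m' u : ℕ →₀ M) n' = 0
              rw [Finsupp.single_apply, if_neg (by omega)]
            set q : SS := ∑ d ∈ p.support,
              Polynomial.monomial (b - m' - (∑ i, d i * γ i))
                (MvPolynomial.monomial d (MvPolynomial.coeff d p)) with hq_def
            have htw : twist γ q = Polynomial.monomial (b - m') p := by
              rw [hq_def, map_sum]
              have hterm : ∀ d ∈ p.support,
                  twist γ (Polynomial.monomial (b - m' - (∑ i, d i * γ i))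
                    (MvPolynomial.monomial d (MvPolynomial.coeff d p)))
                  = Polynomial.monomial (b - m')
                      (MvPolynomial.monomial d (MvPolynomial.coeff d p)) := by
                intro d hd
                have harith : (∑ i, d i * γ i) + (b - m' - (∑ i, d i * γ i)) = b - m' := by
                  have := hp d hd
                  omega
                rw [twist_monomial, harith]
              rw [Finset.sum_congr rfl hterm, ← map_sum,
                MvPolynomial.support_sum_monomial_coeff]
            have hq : q • (t : ReesAmb R γ M)
                = toRees γ (PolynomialModule.single (MvPolynomial (Fin k) R) b (p • u)) := by
              have h1 : q • (t : ReesAmb R γ M)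
                  = toRees γ ((twist γ q) •
                      PolynomialModule.single (MvPolynomial (Fin k) R) m' u) :=
                smul_toRees γ q _
              rw [h1, htw, PolynomialModule.monomial_smul_single]
              have : b - m' + m' = b := by omega
              rw [this]
            have : (t : ReesAmb R γ M) = Submodule.subtype _ t := rfl
            rw [← hq]
            exact ⟨q • t, Submodule.smul_mem _ q (Submodule.subset_span htT), rfl⟩
      | zero =>
          have h0 : PolynomialModule.single (MvPolynomial (Fin k) R) b (0 : M) = 0 :=
            PolynomialModule.single_zero _
          rw [h0]
          exact zero_mem _
      | add y z _ _ hy hz =>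
          have hadd : PolynomialModule.single (MvPolynomial (Fin k) R) b (y + z)
              = PolynomialModule.single (MvPolynomial (Fin k) R) b y
                + PolynomialModule.single (MvPolynomial (Fin k) R) b z := PolynomialModule.single_add _ _ _
          rw [hadd]
          exact add_mem hy hz
      | smul r w _ hw =>
          have hsmul : toRees γ (PolynomialModule.single (MvPolynomial (Fin k) R) b (r • w))
              = (Polynomial.C (MvPolynomial.C r) : SS) •
                  toRees γ (PolynomialModule.single (MvPolynomial (Fin k) R) b w) := by
            rw [C_C_smul_toRees]
            show toRees γ (PolynomialModule.ofCoeff _ (Finsupp.single b (r • w))) = r • toRees γ (PolynomialModule.ofCoeff _ (Finsupp.single b w))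
            have : (Finsupp.single b (r • w) : ℕ →₀ M) = r • Finsupp.single b w :=
              (Finsupp.smul_single r b w).symm
            rw [this]
            rfl
          rw [hsmul]
          exact Submodule.smul_mem _ _ hw
    exact key v hv'
  have hxU : (x : ReesAmb R γ M) ∈ U := by
    have hdecomp : (x : ReesAmb R γ M)
        = ∑ b ∈ (ReesAmb.coe (x : ReesAmb R γ M)).support,
            toRees γ (PolynomialModule.single (MvPolynomial (Fin k) R) b
              (ReesAmb.coe (x : ReesAmb R γ M) b)) := by
      apply PolynomialModule.coeff_injective
      erw [PolynomialModule.coeff_sum]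
      exact (Finsupp.sum_single _).symm
    rw [hdecomp]
    exact Submodule.sum_mem _ fun b _ => hsingle b _ (x.2 b)
  obtain ⟨y, hy, hyx⟩ := hxU
  have : y = x := Subtype.ext hyx
  rwa [this] at hy

end Aux

/-- Let `R` be a commutative ring, `S = R[x₁,…,x_k]`, `M` an `S`-module and
`M̄ = (Mₙ)ₙ` an increasing filtering of `M` with degrees `γ̄ ∈ ℕᵏ`.  For `m ∈ ℕ` let
`Mᵐ = ⊕_{n ≤ m} Mₙ yⁿ ⊆ Rees(M̄)`.  Then `Mᵐ` generates `Rees(M̄)` as an `S[y]`-module if and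
only if `M_m` tightly generates `M̄`: for every `n` and `v ∈ Mₙ` there are `m₁,…,m_r ≤ m`,
`v_j ∈ M_{m_j}` and `p₁,…,p_r ∈ S` with `v = Σ pⱼ • vⱼ` and `deg_γ(pⱼ) + mⱼ ≤ n` for each `j`
(each monomial of `pⱼ` having `γ̄`-degree `≤ n - mⱼ`). -/
theorem stmt_2 {R : Type} [CommRing R] {k : ℕ} {M : Type} [AddCommGroup M] [Module R M]
    [Module (MvPolynomial (Fin k) R) M] [IsScalarTower R (MvPolynomial (Fin k) R) M]
    (γ : Fin k → ℕ) (𝓜 : ℕ → Submodule R M)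
    (hmono : Monotone 𝓜) (hexh : (⨆ n, 𝓜 n) = ⊤)
    (hx : ∀ (i : Fin k) (n : ℕ), ∀ m ∈ 𝓜 n,
      (MvPolynomial.X i : MvPolynomial (Fin k) R) • m ∈ 𝓜 (n + γ i))
    (m : ℕ) :
    Submodule.span (Polynomial (MvPolynomial (Fin k) R))
        {f : reesSubmodule γ 𝓜 hmono hx | ∀ n, m < n → ReesAmb.coe (f : ReesAmb R γ M) n = 0}
        = ⊤ ↔
    ∀ (n : ℕ), ∀ v ∈ 𝓜 n,
      ∃ (r : ℕ) (ms : Fin r → ℕ) (vs : Fin r → M) (ps : Fin r → MvPolynomial (Fin k) R),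
        (∀ j, ms j ≤ m) ∧ (∀ j, vs j ∈ 𝓜 (ms j)) ∧
        (v = ∑ j, ps j • vs j) ∧
        (∀ j, ∀ d ∈ (ps j).support, (∑ i, d i * γ i) + ms j ≤ n) := by
  constructor
  · intro hsp n v hv
    exact (mem_span_genSet_iff γ 𝓜 m n v).mp
      (span_genSet_forward γ 𝓜 hmono hx m hsp n v hv)
  · intro h
    exact span_genSet_backward γ 𝓜 hmono hx m
      (fun n v hv => (mem_span_genSet_iff γ 𝓜 m n v).mpr (h n v hv))
end

section
/- Let R be a commutative ring with unity, λ a length function on R-modules, S = R[x₁,…,x_k], and M̄ an ℕ-graded S-module of degree γ̄ ∈ ℕᵏ. Assume γᵢ > 0 for i = 1,…,k, λ(Mₙ) < ∞ for every n ∈ ℕ, and M is a Noetherian S-module. Then there exists a polynomial p(t) ∈ ℝ[t] such that the formal power series F_{M̄}(t) = Σ_{n∈ℕ} λ(Mₙ)tⁿ equals p(t)/∏_{i=1}^{k}(1 − t^{γᵢ}) in ℝ[[t]]. -/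
open scoped ENNReal

namespace Stmt4Aux

variable {R : Type} [CommRing R]

lemma l_sub_le (L : LengthFunction R) {M : Type} [AddCommGroup M] [Module R M]
    (N : Submodule R M) : L.l N ≤ L.l M := by
  rw [L.l_add M N]; exact le_self_add

lemma l_quot_le (L : LengthFunction R) {M : Type} [AddCommGroup M] [Module R M]
    (N : Submodule R M) : L.l (M ⧸ N) ≤ L.l M := by
  rw [L.l_add M N]; exact le_add_self

lemma l_bot (L : LengthFunction R) {M : Type} [AddCommGroup M] [Module R M]
    {N : Submodule R M} (h : N = ⊥) : L.l N = 0 := by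
  refine L.l_zero _ ?_
  subst h
  infer_instance

lemma exists_poly (f : PowerSeries ℝ) (N : ℕ) (h : ∀ n, N ≤ n → PowerSeries.coeff n f = 0) :
    ∃ p : Polynomial ℝ, f = (p : PowerSeries ℝ) := by
  refine ⟨f.trunc N, ?_⟩
  ext n
  rw [Polynomial.coeff_coe, PowerSeries.coeff_trunc]
  split
  · rfl
  · exact h n (le_of_not_gt ‹_›)

lemma eventually_bot {M : Type} [AddCommGroup M] [Module R M]
    (𝓜 : ℕ → Submodule R M) (hinternal : DirectSum.IsInternal 𝓜)
    (hfg : Module.Finite R M) : ∃ N : ℕ, ∀ n, N ≤ n → 𝓜 n = ⊥ := by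
  classical
  letI dec := hinternal.chooseDecomposition
  obtain ⟨s, hs⟩ := hfg.fg_top
  have key : ∀ m : M, ∃ N : ℕ, m ∈ ⨆ (j : ℕ) (_ : j < N), 𝓜 j := by
    intro m
    obtain ⟨N, hN⟩ : ∃ N, ∀ j ∈ (DirectSum.decompose 𝓜 m).support, j < N :=
      ⟨((DirectSum.decompose 𝓜 m).support.sup id) + 1, fun j hj =>
        Nat.lt_succ_of_le (Finset.le_sup (f := id) hj)⟩
    refine ⟨N, ?_⟩
    rw [← DirectSum.sum_support_decompose 𝓜 m]
    exact Submodule.sum_mem _ fun j hj =>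
      Submodule.mem_iSup_of_mem j
        (Submodule.mem_iSup_of_mem (hN j hj) (DirectSum.decompose 𝓜 m j).2)
  choose f hf using key
  obtain ⟨N, hN⟩ : ∃ N, ∀ m ∈ s, f m ≤ N := ⟨s.sup f, fun m hm => Finset.le_sup hm⟩
  have mono : ∀ {a b : ℕ}, a ≤ b →
      (⨆ (j : ℕ) (_ : j < a), 𝓜 j) ≤ ⨆ (j : ℕ) (_ : j < b), 𝓜 j := fun {a b} h =>
    iSup₂_le fun j hj => le_iSup₂ (f := fun (j : ℕ) (_ : j < b) => 𝓜 j) j (lt_of_lt_of_le hj h)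
  have htop : (⊤ : Submodule R M) ≤ ⨆ (j : ℕ) (_ : j < N), 𝓜 j := by
    rw [← hs]
    exact Submodule.span_le.mpr fun m hm => mono (hN m hm) (hf m)
  refine ⟨N, fun n hn => ?_⟩
  rw [eq_bot_iff]
  intro x hx
  have hle : (⨆ (j : ℕ) (_ : j < N), 𝓜 j) ≤ ⨆ (j : ℕ) (_ : j ≠ n), 𝓜 j :=
    iSup₂_le fun j hj => le_iSup₂ (f := fun (j : ℕ) (_ : j ≠ n) => 𝓜 j) j
      (Nat.ne_of_lt (lt_of_lt_of_le hj hn))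
  have hx2 : x ∈ ⨆ (j : ℕ) (_ : j ≠ n), 𝓜 j := hle (htop Submodule.mem_top)
  exact (Submodule.disjoint_def.mp (hinternal.submodule_iSupIndep n)) x hx hx2

noncomputable def φ {k : ℕ} : MvPolynomial (Fin k) R →+* MvPolynomial (Fin (k+1)) R :=
  (MvPolynomial.rename (Fin.castSucc : Fin k → Fin (k+1)) :
    MvPolynomial (Fin k) R →ₐ[R] MvPolynomial (Fin (k+1)) R).toRingHom

lemma noeth_transfer {k : ℕ} (P : Type) [AddCommGroup P]
    [Module (MvPolynomial (Fin (k+1)) R) P] [Module (MvPolynomial (Fin k) R) P]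
    (hcomp : ∀ (s : MvPolynomial (Fin k) R) (m : P), s • m = (φ s : MvPolynomial (Fin (k+1)) R) • m)
    (hx : ∀ m : P, (MvPolynomial.X (Fin.last k) : MvPolynomial (Fin (k+1)) R) • m = 0)
    (h : IsNoetherian (MvPolynomial (Fin (k+1)) R) P) :
    IsNoetherian (MvPolynomial (Fin k) R) P := by
  rw [isNoetherian_iff] at h ⊢
  have smul_mem : ∀ (Q : Submodule (MvPolynomial (Fin k) R) P)
      (s : MvPolynomial (Fin (k+1)) R) (m : P), m ∈ Q → s • m ∈ Q := by
    intro Q s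
    induction s using MvPolynomial.induction_on with
    | C r =>
      intro m hm
      have : (MvPolynomial.C r : MvPolynomial (Fin (k+1)) R) = φ (MvPolynomial.C r) := by
        simp [φ, MvPolynomial.rename_C]
      rw [this, ← hcomp]
      exact Q.smul_mem _ hm
    | add p q hp hq =>
      intro m hm
      rw [add_smul]
      exact Q.add_mem (hp m hm) (hq m hm)
    | mul_X p i hp =>
      intro m hm
      rw [mul_smul]
      refine hp _ ?_
      induction i using Fin.lastCases with
      | last => rw [hx m]; exact Q.zero_mem
      | cast j =>
        have : (MvPolynomial.X (Fin.castSucc j) : MvPolynomial (Fin (k+1)) R)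
            = φ (MvPolynomial.X j) := by simp [φ]
        rw [this, ← hcomp]
        exact Q.smul_mem _ hm
  let f : Submodule (MvPolynomial (Fin k) R) P → Submodule (MvPolynomial (Fin (k+1)) R) P :=
    fun Q =>
    { carrier := Q
      add_mem' := fun ha hb => Q.add_mem ha hb
      zero_mem' := Q.zero_mem
      smul_mem' := fun s m hm => smul_mem Q s m hm }
  have hf : ∀ {a b : Submodule (MvPolynomial (Fin k) R) P}, f a ≤ f b ↔ a ≤ b := by
    intro a b
    constructor <;> intro hab x hx <;> exact hab hx
  exact Subrelation.wf (fun {a b} hab => lt_iff_le_not_ge.mpr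
    ⟨hf.mpr hab.le, fun hc => hab.not_ge (hf.mp hc)⟩) (InvImage.wf f h)

section Pi

variable {M : Type} [AddCommGroup M] [Module R M] {A : Type} [CommRing A] [Module A M]
  (𝓜 : ℕ → Submodule R M) [DirectSum.Decomposition 𝓜]
  {g : ℕ} (hg : 0 < g) (x : A) (hx : ∀ (n : ℕ), ∀ m ∈ 𝓜 n, x • m ∈ 𝓜 (n + g))

noncomputable def π (n : ℕ) (m : M) : M := (DirectSum.decompose 𝓜 m n : M)

lemma π_mem (n : ℕ) (m : M) : π 𝓜 n m ∈ 𝓜 n := (DirectSum.decompose 𝓜 m n).2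

lemma π_of_mem_same {n : ℕ} {m : M} (h : m ∈ 𝓜 n) : π 𝓜 n m = m :=
  DirectSum.decompose_of_mem_same 𝓜 h

lemma π_of_mem_ne {n j : ℕ} {m : M} (h : m ∈ 𝓜 j) (hne : j ≠ n) : π 𝓜 n m = 0 :=
  DirectSum.decompose_of_mem_ne 𝓜 h hne

lemma π_add (n : ℕ) (a b : M) : π 𝓜 n (a + b) = π 𝓜 n a + π 𝓜 n b := by
  simp [π, DirectSum.decompose_add]

lemma π_sub (n : ℕ) (a b : M) : π 𝓜 n (a - b) = π 𝓜 n a - π 𝓜 n b := by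
  simp [π, DirectSum.decompose_sub]

lemma π_zero (n : ℕ) : π 𝓜 n (0 : M) = 0 := by simp [π]

include hx in
lemma π_comm (n : ℕ) (m : M) : π 𝓜 (n + g) (x • m) = x • π 𝓜 n m := by
  induction m using DirectSum.Decomposition.inductionOn 𝓜 with
  | zero => rw [smul_zero, π_zero, π_zero, smul_zero]
  | @homogeneous j mj =>
    have hmem : x • (mj : M) ∈ 𝓜 (j + g) := hx j mj mj.2
    rcases eq_or_ne n j with rfl | hne
    · rw [π_of_mem_same 𝓜 hmem, π_of_mem_same 𝓜 mj.2]
    · rw [π_of_mem_ne 𝓜 hmem (by omega), π_of_mem_ne 𝓜 mj.2 (Ne.symm hne), smul_zero]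
  | add a b ha hb => rw [smul_add, π_add, π_add, ha, hb, smul_add]

set_option linter.unusedSectionVars false in
include hg hx in
lemma π_low (d : ℕ) (hd : d < g) (m : M) : π 𝓜 d (x • m) = 0 := by
  induction m using DirectSum.Decomposition.inductionOn 𝓜 with
  | zero => rw [smul_zero, π_zero]
  | @homogeneous j mj => exact π_of_mem_ne 𝓜 (hx j mj mj.2) (by omega)
  | add a b ha hb => rw [smul_add, π_add, ha, hb, add_zero]

lemma π_eq_zero_of_mem_iSup_ne (n : ℕ) (m : M) (h : m ∈ ⨆ (j : ℕ) (_ : j ≠ n), 𝓜 j) :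
    π 𝓜 n m = 0 := by
  refine Submodule.iSup_induction _ (motive := fun m => π 𝓜 n m = 0) h ?_ (π_zero 𝓜 n) ?_
  · rintro j y hy
    rcases eq_or_ne j n with rfl | hne
    · rw [iSup_neg (by simp)] at hy
      have : y = 0 := by simpa using hy
      rw [this, π_zero]
    · rw [iSup_pos hne] at hy
      exact π_of_mem_ne 𝓜 hy hne
  · intro a b ha hb
    rw [π_add, ha, hb, add_zero]

end Pi

end Stmt4Aux

namespace Stmt4Aux

theorem aux (R : Type) [CommRing R] (L : LengthFunction R) (k : ℕ) :
    ∀ (M : Type) [AddCommGroup M] [Module R M]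
      [Module (MvPolynomial (Fin k) R) M] [IsScalarTower R (MvPolynomial (Fin k) R) M]
      (γ : Fin k → ℕ), (∀ i, 0 < γ i) → ∀ (𝓜 : ℕ → Submodule R M),
      DirectSum.IsInternal 𝓜 →
      (∀ (i : Fin k) (n : ℕ), ∀ m ∈ 𝓜 n,
        (MvPolynomial.X i : MvPolynomial (Fin k) R) • m ∈ 𝓜 (n + γ i)) →
      (∀ n : ℕ, L.l (𝓜 n) < ⊤) →
      IsNoetherian (MvPolynomial (Fin k) R) M →
      ∃ p : Polynomial ℝ,
        (PowerSeries.mk fun n => (L.l (𝓜 n)).toReal) *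
            (∏ i : Fin k, (1 - (PowerSeries.X : PowerSeries ℝ) ^ γ i)) =
          (p : PowerSeries ℝ) := by
  induction k with
  | zero =>
    intro M _ _ _ _ γ hγ 𝓜 hinternal hgraded hfin hnoeth
    haveI := hnoeth
    haveI : Module.Finite (MvPolynomial (Fin 0) R) M := inferInstance
    haveI : Module.Finite R (MvPolynomial (Fin 0) R) :=
      Module.Finite.of_surjective (Algebra.linearMap R (MvPolynomial (Fin 0) R))
        (by
          intro p
          obtain ⟨r, rfl⟩ := MvPolynomial.C_surjective (R := R) (Fin 0) p
          exact ⟨r, by simp [MvPolynomial.algebraMap_eq]⟩)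
    have hMfin : Module.Finite R M := Module.Finite.trans (MvPolynomial (Fin 0) R) M
    obtain ⟨N, hN⟩ := eventually_bot 𝓜 hinternal hMfin
    rw [Finset.univ_eq_empty, Finset.prod_empty, mul_one]
    refine exists_poly _ N fun n hn => ?_
    rw [PowerSeries.coeff_mk]
    rw [l_bot L (hN n hn)]
    simp
  | succ k ih =>
    intro M _ _ _ _ γ hγ 𝓜 hinternal hgraded hfin hnoeth
    classical
    haveI := hnoeth
    letI dec := hinternal.chooseDecomposition
    set S := MvPolynomial (Fin (k+1)) R with hS
    set x : S := MvPolynomial.X (Fin.last k) with hxdef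
    set g := γ (Fin.last k) with hgdef
    have hg : 0 < g := hγ _
    have hx : ∀ (n : ℕ), ∀ m ∈ 𝓜 n, x • m ∈ 𝓜 (n + g) := fun n m hm =>
      hgraded (Fin.last k) n m hm
    -- the multiplication-by-x map and kernel/image
    let xmap : M →ₗ[S] M := LinearMap.lsmul S M x
    have hxmap : ∀ m : M, xmap m = x • m := fun m => rfl
    let K : Submodule S M := LinearMap.ker xmap
    let N : Submodule S M := LinearMap.range xmap
    -- R-linear inclusion and quotient maps
    let ι : ↥K →ₗ[R] M := K.subtype.restrictScalars R
    let mkR : M →ₗ[R] (M ⧸ N) := N.mkQ.restrictScalars R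
    have hmkR : ∀ m : M, mkR m = Submodule.Quotient.mk m := fun m => rfl
    have hmkR_surj : Function.Surjective mkR := Submodule.Quotient.mk_surjective N
    -- gradings on K and M ⧸ N
    let 𝓚 : ℕ → Submodule R ↥K := fun n => (𝓜 n).comap ι
    let 𝓒 : ℕ → Submodule R (M ⧸ N) := fun n => (𝓜 n).map mkR
    -- small polynomial ring actions
    letI instK : Module (MvPolynomial (Fin k) R) ↥K := Module.compHom ↥K (φ (R := R) (k := k))
    letI instC : Module (MvPolynomial (Fin k) R) (M ⧸ N) :=
      Module.compHom (M ⧸ N) (φ (R := R) (k := k))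
    have hcompK : ∀ (s : MvPolynomial (Fin k) R) (m : ↥K), s • m = (φ s : S) • m := fun _ _ => rfl
    have hcompC : ∀ (s : MvPolynomial (Fin k) R) (m : M ⧸ N), s • m = (φ s : S) • m :=
      fun _ _ => rfl
    have hφalg : ∀ r : R, (φ (algebraMap R (MvPolynomial (Fin k) R) r) : S) = algebraMap R S r :=
      fun r => by
        show (MvPolynomial.rename (Fin.castSucc : Fin k → Fin (k+1))
          (algebraMap R (MvPolynomial (Fin k) R) r) : MvPolynomial (Fin (k+1)) R)
            = algebraMap R (MvPolynomial (Fin (k+1)) R) r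
        simp [MvPolynomial.algebraMap_eq]
    haveI towK : IsScalarTower R (MvPolynomial (Fin k) R) ↥K := by
      constructor
      intro r s m
      show (φ (r • s) : S) • m = r • ((φ s : S) • m)
      rw [Algebra.smul_def, map_mul, mul_smul, ← algebraMap_smul S r ((φ s : S) • m), hφalg]
    haveI towC : IsScalarTower R (MvPolynomial (Fin k) R) (M ⧸ N) := by
      constructor
      intro r s m
      show (φ (r • s) : S) • m = r • ((φ s : S) • m)
      rw [Algebra.smul_def, map_mul, mul_smul, ← algebraMap_smul S r ((φ s : S) • m), hφalg]
    -- x acts as zero on K and on M ⧸ N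
    have hxK : ∀ m : ↥K, x • m = 0 := by
      intro m
      apply Subtype.ext
      exact m.2
    have hxC : ∀ c : M ⧸ N, x • c = 0 := by
      intro c
      obtain ⟨m, rfl⟩ := hmkR_surj c
      rw [hmkR, ← Submodule.Quotient.mk_smul]
      exact (Submodule.Quotient.mk_eq_zero N).mpr ⟨m, rfl⟩
    -- Noetherianity
    have hnoethK : IsNoetherian (MvPolynomial (Fin k) R) ↥K :=
      noeth_transfer ↥K hcompK hxK inferInstance
    have hnoethC : IsNoetherian (MvPolynomial (Fin k) R) (M ⧸ N) :=
      noeth_transfer (M ⧸ N) hcompC hxC inferInstance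
    -- components of kernel elements lie in the kernel
    have hπK : ∀ (n : ℕ) (m : M), m ∈ K → π 𝓜 n m ∈ K := by
      intro n m hm
      have : x • π 𝓜 n m = 0 := by
        rw [← π_comm 𝓜 x hx n m, show x • m = 0 from hm, π_zero]
      exact this
    -- internality of the grading on K
    have hinternalK : DirectSum.IsInternal 𝓚 := by
      rw [DirectSum.isInternal_submodule_iff_iSupIndep_and_iSup_eq_top]
      constructor
      · intro n
        rw [Submodule.disjoint_def]
        intro m hm hm2
        have h1 : (m : M) ∈ 𝓜 n := hm
        have h2 : (m : M) ∈ ⨆ (j : ℕ) (_ : j ≠ n), 𝓜 j := by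
          have hle : (⨆ (j : ℕ) (_ : j ≠ n), 𝓚 j) ≤
              ((⨆ (j : ℕ) (_ : j ≠ n), 𝓜 j).comap ι) :=
            iSup₂_le fun j hj => le_trans (le_refl (𝓚 j))
              (Submodule.comap_mono (le_iSup₂ (f := fun (j : ℕ) (_ : j ≠ n) => 𝓜 j) j hj))
          exact hle hm2
        have := Submodule.disjoint_def.mp (hinternal.submodule_iSupIndep n) _ h1 h2
        exact Subtype.ext this
      · rw [eq_top_iff]
        intro m _
        have hsum : (∑ j ∈ (DirectSum.decompose 𝓜 (m : M)).support,
            (⟨π 𝓜 j (m : M), hπK j (m : M) m.2⟩ : ↥K)) = m := by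
          apply Subtype.ext
          push_cast
          exact DirectSum.sum_support_decompose 𝓜 (m : M)
        rw [← hsum]
        refine Submodule.sum_mem _ fun j _ => Submodule.mem_iSup_of_mem j ?_
        exact π_mem 𝓜 j (m : M)
    -- internality of the grading on M ⧸ N
    have hCmap : ∀ n : ℕ, (⨆ (j : ℕ) (_ : j ≠ n), 𝓒 j)
        = Submodule.map mkR (⨆ (j : ℕ) (_ : j ≠ n), 𝓜 j) := by
      intro n
      simp_rw [𝓒, Submodule.map_iSup]
    have hNmem : ∀ m : M, m ∈ N ↔ ∃ u : M, x • u = m := by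
      intro m
      constructor
      · rintro ⟨u, rfl⟩; exact ⟨u, rfl⟩
      · rintro ⟨u, rfl⟩; exact ⟨u, rfl⟩
    have hπN : ∀ (n : ℕ) (m : M), m ∈ N → π 𝓜 n m ∈ N := by
      intro n m hm
      obtain ⟨u, rfl⟩ := (hNmem m).mp hm
      rcases le_or_gt g n with hgle | hlt
      · have : n - g + g = n := Nat.sub_add_cancel hgle
        rw [← this, π_comm 𝓜 x hx]
        exact ⟨_, rfl⟩
      · rw [π_low 𝓜 hg x hx n hlt]
        exact N.zero_mem
    have hinternalC : DirectSum.IsInternal 𝓒 := by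
      rw [DirectSum.isInternal_submodule_iff_iSupIndep_and_iSup_eq_top]
      constructor
      · intro n
        rw [Submodule.disjoint_def]
        intro c hc hc2
        obtain ⟨u, hu, rfl⟩ := hc
        rw [hCmap n] at hc2
        obtain ⟨v, hv, hvc⟩ := hc2
        have huv : u - v ∈ N := by
          have : mkR (u - v) = 0 := by rw [map_sub, hvc, sub_self]
          rwa [hmkR, Submodule.Quotient.mk_eq_zero] at this
        have hu2 : u ∈ N := by
          have e1 : π 𝓜 n u = u := π_of_mem_same 𝓜 hu
          have e2 : π 𝓜 n v = 0 := π_eq_zero_of_mem_iSup_ne 𝓜 n v hv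
          have : u = π 𝓜 n (u - v) := by rw [π_sub, e1, e2, sub_zero]
          rw [this]
          exact hπN n _ huv
        rw [hmkR, Submodule.Quotient.mk_eq_zero]
        exact hu2
      · rw [eq_top_iff]
        intro c _
        obtain ⟨m, rfl⟩ := hmkR_surj c
        have h1 : m ∈ ⨆ (j : ℕ), 𝓜 j := hinternal.submodule_iSup_eq_top.symm ▸ Submodule.mem_top
        have : mkR m ∈ Submodule.map mkR (⨆ (j : ℕ), 𝓜 j) := ⟨m, h1, rfl⟩
        rw [Submodule.map_iSup] at this
        exact this
    -- graded structure on K over the smaller polynomial ring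
    have hφX : ∀ j : Fin k, (φ (MvPolynomial.X j) : S) = MvPolynomial.X (Fin.castSucc j) :=
      fun j => by simp [φ]
    have hgradedK : ∀ (i : Fin k) (n : ℕ), ∀ m ∈ 𝓚 n,
        (MvPolynomial.X i : MvPolynomial (Fin k) R) • m ∈ 𝓚 (n + γ (Fin.castSucc i)) := by
      intro i n m hm
      show ι ((MvPolynomial.X i : MvPolynomial (Fin k) R) • m) ∈ 𝓜 (n + γ (Fin.castSucc i))
      have : ι ((MvPolynomial.X i : MvPolynomial (Fin k) R) • m)
          = (MvPolynomial.X (Fin.castSucc i) : S) • (m : M) := by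
        rw [hcompK, hφX]
        rfl
      rw [this]
      exact hgraded (Fin.castSucc i) n (m : M) hm
    have hgradedC : ∀ (i : Fin k) (n : ℕ), ∀ c ∈ 𝓒 n,
        (MvPolynomial.X i : MvPolynomial (Fin k) R) • c ∈ 𝓒 (n + γ (Fin.castSucc i)) := by
      intro i n c hc
      obtain ⟨u, hu, rfl⟩ := hc
      refine ⟨(MvPolynomial.X (Fin.castSucc i) : S) • u, hgraded (Fin.castSucc i) n u hu, ?_⟩
      rw [hcompC, hφX, hmkR, hmkR, ← Submodule.Quotient.mk_smul]
    -- submodules of 𝓜 n : kernel and image parts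
    let KM : (n : ℕ) → Submodule R ↥(𝓜 n) := fun n => (K.restrictScalars R).comap (𝓜 n).subtype
    let IM : (n : ℕ) → Submodule R ↥(𝓜 n) := fun n => (N.restrictScalars R).comap (𝓜 n).subtype
    -- length of 𝓚 n equals length of KM n
    have e1 : ∀ n, L.l (𝓚 n) = L.l (KM n) := by
      intro n
      refine L.l_congr _ _ ?_
      exact
        { toFun := fun m => ⟨⟨(m.1 : M), m.2⟩, m.1.2⟩
          invFun := fun y => ⟨⟨(y.1 : M), y.2⟩, y.1.2⟩
          map_add' := fun a b => rfl
          map_smul' := fun r a => rfl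
          left_inv := fun a => rfl
          right_inv := fun a => rfl }
    -- the multiplication map on graded pieces
    have hrestrict : ∀ n : ℕ, ∀ m : M, m ∈ 𝓜 n → (xmap.restrictScalars R) m ∈ 𝓜 (n + g) :=
      fun n m hm => hx n m hm
    let gm : (n : ℕ) → (↥(𝓜 n) →ₗ[R] ↥(𝓜 (n + g))) := fun n =>
      LinearMap.restrict (xmap.restrictScalars R) (hrestrict n)
    have hgm : ∀ (n : ℕ) (m : ↥(𝓜 n)), ((gm n m : ↥(𝓜 (n+g))) : M) = x • (m : M) :=
      fun n m => rfl
    have hker : ∀ n, LinearMap.ker (gm n) = KM n := by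
      intro n
      ext m
      constructor
      · intro h
        have : ((gm n m : ↥(𝓜 (n+g))) : M) = 0 := by
          rw [show (gm n m) = 0 from h]; rfl
        rw [hgm] at this
        exact this
      · intro h
        have : ((gm n m : ↥(𝓜 (n+g))) : M) = 0 := by rw [hgm]; exact h
        exact Subtype.ext this
    have hrange : ∀ n, LinearMap.range (gm n) = IM (n + g) := by
      intro n
      ext w
      constructor
      · rintro ⟨u, rfl⟩
        show ((gm n u : ↥(𝓜 (n+g))) : M) ∈ N
        rw [hgm]
        exact ⟨u, rfl⟩
      · intro hw
        obtain ⟨u, hu⟩ := (hNmem (w : M)).mp hw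
        have hπu : π 𝓜 n u ∈ 𝓜 n := π_mem 𝓜 n u
        refine ⟨⟨π 𝓜 n u, hπu⟩, ?_⟩
        apply Subtype.ext
        rw [hgm]
        rw [← π_comm 𝓜 x hx n u, hu]
        exact π_of_mem_same 𝓜 w.2
    -- length identity (i)
    have hi : ∀ n, L.l (𝓜 n) = L.l (KM n) + L.l (IM (n + g)) := by
      intro n
      have h1 := L.l_add ↥(𝓜 n) (LinearMap.ker (gm n))
      have h2 : L.l (↥(𝓜 n) ⧸ LinearMap.ker (gm n)) = L.l (LinearMap.range (gm n)) :=
        L.l_congr _ _ (gm n).quotKerEquivRange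
      rw [h2, hker, hrange] at h1
      exact h1
    -- length identity (ii)
    let f2 : (n : ℕ) → (↥(𝓜 n) →ₗ[R] (M ⧸ N)) := fun n => mkR.comp (𝓜 n).subtype
    have hkerf2 : ∀ n, LinearMap.ker (f2 n) = IM n := by
      intro n
      ext m
      show mkR (m : M) = 0 ↔ (m : M) ∈ N
      rw [hmkR, Submodule.Quotient.mk_eq_zero]
    have hrangef2 : ∀ n, LinearMap.range (f2 n) = 𝓒 n := by
      intro n
      ext c
      constructor
      · rintro ⟨u, rfl⟩
        exact ⟨(u : M), u.2, rfl⟩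
      · rintro ⟨u, hu, rfl⟩
        exact ⟨⟨u, hu⟩, rfl⟩
    have hii : ∀ n, L.l (𝓜 n) = L.l (IM n) + L.l (𝓒 n) := by
      intro n
      have h1 := L.l_add ↥(𝓜 n) (LinearMap.ker (f2 n))
      have h2 : L.l (↥(𝓜 n) ⧸ LinearMap.ker (f2 n)) = L.l (LinearMap.range (f2 n)) :=
        L.l_congr _ _ (f2 n).quotKerEquivRange
      rw [h2, hkerf2, hrangef2] at h1
      exact h1
    -- identity (iii) : low degrees have no image part
    have hiii : ∀ n, n < g → L.l (IM n) = 0 := by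
      intro n hn
      refine l_bot L ?_
      rw [eq_bot_iff]
      intro m hm
      obtain ⟨u, hu⟩ := (hNmem (m : M)).mp hm
      have : (m : M) = 0 := by
        rw [← π_of_mem_same 𝓜 m.2, ← hu, π_low 𝓜 hg x hx n hn]
      exact Subtype.ext this
    -- finiteness
    have hfinKM : ∀ n, L.l (KM n) ≠ ⊤ := fun n =>
      (lt_of_le_of_lt (l_sub_le L (KM n)) (hfin n)).ne
    have hfinIM : ∀ n, L.l (IM n) ≠ ⊤ := fun n =>
      (lt_of_le_of_lt (l_sub_le L (IM n)) (hfin n)).ne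
    have hfinC : ∀ n, L.l (𝓒 n) < ⊤ := by
      intro n
      refine lt_of_le_of_lt ?_ (hfin n)
      rw [hii n]
      exact le_add_self
    have hfinK : ∀ n, L.l (𝓚 n) < ⊤ := by
      intro n
      rw [e1 n]
      exact lt_of_le_of_lt (l_sub_le L (KM n)) (hfin n)
    -- apply the induction hypothesis
    obtain ⟨pK, hpK⟩ := ih ↥K (fun i => γ (Fin.castSucc i)) (fun i => hγ _) 𝓚 hinternalK
      hgradedK hfinK hnoethK
    obtain ⟨pC, hpC⟩ := ih (M ⧸ N) (fun i => γ (Fin.castSucc i)) (fun i => hγ _) 𝓒 hinternalC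
      hgradedC hfinC hnoethC
    -- real-valued identities
    set bR : ℕ → ℝ := fun n => (L.l (𝓜 n)).toReal with hbR
    set κR : ℕ → ℝ := fun n => (L.l (KM n)).toReal with hκR
    set ιR : ℕ → ℝ := fun n => (L.l (IM n)).toReal with hιR
    set cR : ℕ → ℝ := fun n => (L.l (𝓒 n)).toReal with hcR
    have hiR : ∀ n, bR n = κR n + ιR (n + g) := by
      intro n
      rw [hbR, hκR, hιR]
      simp only []
      rw [hi n, ENNReal.toReal_add (hfinKM n) (hfinIM (n+g))]
    have hiiR : ∀ n, bR n = ιR n + cR n := by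
      intro n
      rw [hbR, hιR, hcR]
      simp only []
      rw [hii n, ENNReal.toReal_add (hfinIM n) (hfinC n).ne]
    have hiiiR : ∀ n, n < g → ιR n = 0 := by
      intro n hn
      rw [hιR]
      simp only []
      rw [hiii n hn]
      rfl
    have hκeq : ∀ n, (L.l (𝓚 n)).toReal = κR n := fun n => by rw [e1 n]
    -- key power series identity
    have key : (PowerSeries.mk bR) * (1 - (PowerSeries.X : PowerSeries ℝ) ^ g) =
        (PowerSeries.mk cR) - (PowerSeries.X : PowerSeries ℝ) ^ g * (PowerSeries.mk κR) := by
      ext n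
      rw [mul_sub, mul_one, map_sub, map_sub, mul_comm ((PowerSeries.X : PowerSeries ℝ) ^ g)]
      rw [PowerSeries.coeff_mul_X_pow', PowerSeries.coeff_mul_X_pow']
      simp only [PowerSeries.coeff_mk]
      rcases le_or_gt g n with hle | hlt
      · rw [if_pos hle, if_pos hle]
        have h1 := hiiR n
        have h2 := hiR (n - g)
        rw [Nat.sub_add_cancel hle] at h2
        linarith
      · rw [if_neg (not_le.mpr hlt), if_neg (not_le.mpr hlt)]
        have h1 := hiiR n
        have h3 := hiiiR n hlt
        linarith
    -- assemble
    refine ⟨pC - Polynomial.X ^ g * pK, ?_⟩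
    have hsplit : (∏ i : Fin (k+1), (1 - (PowerSeries.X : PowerSeries ℝ) ^ γ i)) =
        (∏ i : Fin k, (1 - (PowerSeries.X : PowerSeries ℝ) ^ γ (Fin.castSucc i))) *
          (1 - (PowerSeries.X : PowerSeries ℝ) ^ g) := by
      rw [Fin.prod_univ_castSucc]
    calc (PowerSeries.mk bR) * (∏ i : Fin (k+1), (1 - (PowerSeries.X : PowerSeries ℝ) ^ γ i))
        = ((PowerSeries.mk bR) * (1 - (PowerSeries.X : PowerSeries ℝ) ^ g)) *
            (∏ i : Fin k, (1 - (PowerSeries.X : PowerSeries ℝ) ^ γ (Fin.castSucc i))) := by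
          rw [hsplit]; ring
      _ = ((PowerSeries.mk cR) - (PowerSeries.X : PowerSeries ℝ) ^ g * (PowerSeries.mk κR)) *
            (∏ i : Fin k, (1 - (PowerSeries.X : PowerSeries ℝ) ^ γ (Fin.castSucc i))) := by
          rw [key]
      _ = (PowerSeries.mk cR) *
            (∏ i : Fin k, (1 - (PowerSeries.X : PowerSeries ℝ) ^ γ (Fin.castSucc i)))
          - (PowerSeries.X : PowerSeries ℝ) ^ g * ((PowerSeries.mk κR) *
            (∏ i : Fin k, (1 - (PowerSeries.X : PowerSeries ℝ) ^ γ (Fin.castSucc i)))) := by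
          ring
      _ = (pC : PowerSeries ℝ) - (PowerSeries.X : PowerSeries ℝ) ^ g * (pK : PowerSeries ℝ) := by
          have hκmk : (PowerSeries.mk fun n => (L.l (𝓚 n)).toReal) = PowerSeries.mk κR := by
            ext n; rw [PowerSeries.coeff_mk, PowerSeries.coeff_mk, hκeq]
          rw [← hpC, ← hpK, hκmk]
      _ = ((pC - Polynomial.X ^ g * pK : Polynomial ℝ) : PowerSeries ℝ) := by
          rw [Polynomial.coe_sub, Polynomial.coe_mul, Polynomial.coe_pow, Polynomial.coe_X]

end Stmt4Aux

/-- Let `R` be a commutative ring, `λ` a length function on `R`-modules,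
`S = R[x₁,…,x_k]`, and `M̄` an ℕ-graded `S`-module of degree `γ̄ ∈ ℕᵏ`.  Assume `γᵢ > 0` for all
`i`, `λ(Mₙ) < ∞` for every `n`, and `M` is a Noetherian `S`-module.  Then there is a polynomial
`p(t) ∈ ℝ[t]` with `F_{M̄}(t) = Σₙ λ(Mₙ) tⁿ = p(t) / ∏ᵢ (1 - t^{γᵢ})` in `ℝ[[t]]`
(equivalently, `F_{M̄}(t) · ∏ᵢ (1 - t^{γᵢ}) = p(t)`, the denominator being a unit). -/
theorem stmt_4 {R : Type} [CommRing R] {k : ℕ} (L : LengthFunction R)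
    {M : Type} [AddCommGroup M] [Module R M]
    [Module (MvPolynomial (Fin k) R) M] [IsScalarTower R (MvPolynomial (Fin k) R) M]
    (γ : Fin k → ℕ) (hγ : ∀ i, 0 < γ i)
    (𝓜 : ℕ → Submodule R M)
    (hinternal : DirectSum.IsInternal 𝓜)
    (hgraded : ∀ (i : Fin k) (n : ℕ), ∀ m ∈ 𝓜 n,
      (MvPolynomial.X i : MvPolynomial (Fin k) R) • m ∈ 𝓜 (n + γ i))
    (hfin : ∀ n : ℕ, L.l (𝓜 n) < ⊤)
    (hnoeth : IsNoetherian (MvPolynomial (Fin k) R) M) :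
    ∃ p : Polynomial ℝ,
      (PowerSeries.mk fun n => (L.l (𝓜 n)).toReal) *
          (∏ i : Fin k, (1 - (PowerSeries.X : PowerSeries ℝ) ^ γ i)) =
        (p : PowerSeries ℝ) := by
  exact Stmt4Aux.aux R L k M γ hγ 𝓜 hinternal hgraded hfin hnoeth
end

section
/- Let p, q ∈ ℝ[t₁,…,t_ℓ] be polynomials such that: p(n̄) ≥ 0 and q(n̄) ≥ 0 for all sufficiently large n̄ ∈ ℕ^ℓ; and p ≃ q, meaning there exist c̄, c̄' ∈ ℕ^ℓ with p(n̄) ≤ q(n̄ + c̄) and q(n̄) ≤ p(n̄ + c̄') for all sufficiently large n̄ ∈ ℕ^ℓ. Then p and q have the same leading homogeneous component (the nonzero homogeneous part of highest total degree). -/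
open Polynomial Filter

namespace Stmt8Aux

lemma ratio_tendsto (i d : ℕ) (hid : i ≤ d) :
    Tendsto (fun m : ℕ => (m : ℝ) ^ i / (m : ℝ) ^ d) atTop
      (nhds (if i = d then (1 : ℝ) else 0)) := by
  rcases eq_or_lt_of_le hid with rfl | hlt
  · simp only [if_pos rfl, if_true]
    apply Tendsto.congr' _ tendsto_const_nhds
    filter_upwards [eventually_ge_atTop 1] with m hm
    have hm0 : (m : ℝ) ≠ 0 := by positivity
    rw [div_self (pow_ne_zero _ hm0)]
  · rw [if_neg hlt.ne]
    have h0 : Tendsto (fun x : ℝ => x ^ ((i : ℤ) - d)) atTop (nhds 0) :=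
      tendsto_zpow_atTop_zero (by omega)
    apply (h0.comp tendsto_natCast_atTop_atTop).congr'
    filter_upwards [eventually_ge_atTop 1] with m hm
    have hm0 : (m : ℝ) ≠ 0 := by positivity
    simp [Function.comp, zpow_sub₀ hm0]

lemma tendsto_eval_div_pow (h : ℝ[X]) (d : ℕ) (hd : h.natDegree ≤ d) :
    Tendsto (fun m : ℕ => h.eval (m : ℝ) / (m : ℝ) ^ d) atTop (nhds (h.coeff d)) := by
  have hrw : ∀ m : ℕ, h.eval (m : ℝ) / (m : ℝ) ^ d
      = ∑ i ∈ Finset.range (d + 1), h.coeff i * ((m : ℝ) ^ i / (m : ℝ) ^ d) := by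
    intro m
    rw [Polynomial.eval_eq_sum_range' (Nat.lt_succ_of_le hd), Finset.sum_div]
    simp [mul_div_assoc]
  simp only [hrw]
  have hsum : ∑ i ∈ Finset.range (d + 1), h.coeff i * (if i = d then (1 : ℝ) else 0)
      = h.coeff d := by
    simp [mul_ite, Finset.sum_ite_eq', Nat.lt_succ_iff]
  rw [← hsum]
  exact tendsto_finset_sum _ fun i hi =>
    (ratio_tendsto i d (Nat.lt_succ_iff.mp (Finset.mem_range.mp hi))).const_mul _

lemma coeff_le_coeff (f g : ℝ[X]) (d N : ℕ) (hf : f.natDegree ≤ d) (hg : g.natDegree ≤ d)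
    (h : ∀ m : ℕ, N ≤ m → f.eval (m : ℝ) ≤ g.eval (m : ℝ)) : f.coeff d ≤ g.coeff d := by
  refine le_of_tendsto_of_tendsto (tendsto_eval_div_pow f d hf) (tendsto_eval_div_pow g d hg) ?_
  filter_upwards [eventually_ge_atTop (max N 1)] with m hm
  have h1 : (0 : ℝ) < (m : ℝ) ^ d := by
    have : (1 : ℕ) ≤ m := le_trans (le_max_right _ _) hm
    positivity
  have := h m (le_trans (le_max_left _ _) hm)
  gcongr


lemma coeff_prod_at (s : Finset (Fin L)) (F : Fin L → ℝ[X]) (n : Fin L → ℕ)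
    (h : ∀ i ∈ s, (F i).natDegree ≤ n i) :
    (∏ i ∈ s, F i).coeff (∑ i ∈ s, n i) = ∏ i ∈ s, (F i).coeff (n i) := by
  induction s using Finset.cons_induction with
  | empty => simp
  | cons i s his ih =>
    rw [Finset.prod_cons, Finset.sum_cons, Finset.prod_cons,
      Polynomial.coeff_mul_add_eq_of_natDegree_le (h i (Finset.mem_cons_self i s))
        ((Polynomial.natDegree_prod_le _ _).trans
          (Finset.sum_le_sum fun j hj => h j (Finset.mem_cons_of_mem hj))),
      ih fun j hj => h j (Finset.mem_cons_of_mem hj)]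

variable {L : ℕ}

lemma natDegree_fi (a c : ℝ) :
    (Polynomial.C a * Polynomial.X + Polynomial.C c).natDegree ≤ 1 :=
  (Polynomial.natDegree_add_le _ _).trans (by
    simp only [Polynomial.natDegree_C, max_le_iff]
    exact ⟨(Polynomial.natDegree_C_mul_le _ _).trans (by simp), Nat.zero_le _⟩)

lemma natDegree_term_le (a c : Fin L → ℝ) (α : Fin L →₀ ℕ) :
    (∏ i : Fin L, (Polynomial.C (a i) * Polynomial.X + Polynomial.C (c i)) ^ α i).natDegree
      ≤ ∑ i : Fin L, α i :=
  (Polynomial.natDegree_prod_le _ _).trans (Finset.sum_le_sum fun i _ =>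
    Polynomial.natDegree_pow_le.trans (by
      simpa using Nat.mul_le_mul_left (α i) (natDegree_fi (a i) (c i))))

lemma natDegree_subst_le (p : MvPolynomial (Fin L) ℝ) (a c : Fin L → ℝ) :
    (MvPolynomial.aeval
        (fun i => Polynomial.C (a i) * Polynomial.X + Polynomial.C (c i)) p).natDegree
      ≤ p.totalDegree := by
  rw [MvPolynomial.aeval_def, MvPolynomial.eval₂_eq']
  refine Polynomial.natDegree_sum_le_of_forall_le _ _ fun α hα => ?_
  refine (Polynomial.natDegree_C_mul_le _ _).trans ((natDegree_term_le a c α).trans ?_)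
  rw [show ∑ i : Fin L, α i = α.sum fun _ e => e from (Finsupp.sum_fintype α (fun _ e => e) fun _ => rfl).symm]
  exact MvPolynomial.le_totalDegree hα

lemma coeff_subst (p : MvPolynomial (Fin L) ℝ) (a c : Fin L → ℝ) (d : ℕ)
    (hd : p.totalDegree ≤ d) :
    (MvPolynomial.aeval
        (fun i => Polynomial.C (a i) * Polynomial.X + Polynomial.C (c i)) p).coeff d
      = MvPolynomial.eval a (MvPolynomial.homogeneousComponent d p) := by
  rw [MvPolynomial.aeval_def, MvPolynomial.eval₂_eq', MvPolynomial.homogeneousComponent_apply,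
    map_sum, Polynomial.finset_sum_coeff, Finset.sum_filter]
  refine Finset.sum_congr rfl fun α hα => ?_
  have hle : (∑ i : Fin L, α i) ≤ d := by
    rw [show ∑ i : Fin L, α i = α.sum fun _ e => e from (Finsupp.sum_fintype α (fun _ e => e) fun _ => rfl).symm]
    exact (MvPolynomial.le_totalDegree hα).trans hd
  have hdeg : α.degree = ∑ i : Fin L, α i :=
    Finset.sum_subset (Finset.subset_univ α.support)
      (fun i _ hi => Finsupp.notMem_support_iff.mp hi)
  by_cases hcase : α.degree = d
  · rw [if_pos hcase]
    have hsum : d = ∑ i : Fin L, α i := by rw [← hcase, hdeg]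
    rw [MvPolynomial.eval_monomial, hsum,
      show (algebraMap ℝ ℝ[X]) (MvPolynomial.coeff α p)
        = Polynomial.C (MvPolynomial.coeff α p) from rfl, Polynomial.coeff_C_mul,
      coeff_prod_at Finset.univ _ (fun i => α i) (fun i _ => Polynomial.natDegree_pow_le.trans (by
        simpa using Nat.mul_le_mul_left (α i) (natDegree_fi (a i) (c i))))]
    congr 1
    · rw [Finsupp.prod_fintype _ _ fun _ => pow_zero _]
      refine Finset.prod_congr rfl fun i _ => ?_
      have hpow := Polynomial.coeff_pow_of_natDegree_le (m := α i) (natDegree_fi (a i) (c i))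
      rw [mul_one] at hpow
      rw [hpow]
      simp
  · rw [if_neg hcase]
    have hlt : (∑ i : Fin L, α i) < d := by
      rcases lt_or_eq_of_le hle with h | h
      · exact h
      · exact absurd (hdeg.trans h) hcase
    rw [show (algebraMap ℝ ℝ[X]) (MvPolynomial.coeff α p)
        = Polynomial.C (MvPolynomial.coeff α p) from rfl, Polynomial.coeff_C_mul,
      Polynomial.coeff_eq_zero_of_natDegree_lt ((natDegree_term_le a c α).trans_lt hlt),
      mul_zero]

lemma eval_subst (p : MvPolynomial (Fin L) ℝ) (a c : Fin L → ℝ) (m : ℝ) :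
    Polynomial.eval m (MvPolynomial.aeval
        (fun i => Polynomial.C (a i) * Polynomial.X + Polynomial.C (c i)) p)
      = MvPolynomial.eval (fun i => a i * m + c i) p := by
  have h2 := MvPolynomial.comp_aeval
    (f := fun i => Polynomial.C (a i) * Polynomial.X + Polynomial.C (c i))
    (φ := Polynomial.aeval m)
  have h3 := AlgHom.congr_fun h2 p
  simp only [AlgHom.coe_comp, Function.comp_apply] at h3
  rw [← Polynomial.coe_aeval_eq_eval]
  show Polynomial.aeval m _ = _
  rw [h3]
  have hfun : (fun i => Polynomial.aeval m
      (Polynomial.C (a i) * Polynomial.X + Polynomial.C (c i))) = fun i => a i * m + c i := by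
    funext i
    rw [map_add, map_mul, Polynomial.aeval_X, Polynomial.aeval_C, Polynomial.aeval_C]
    simp [Algebra.algebraMap_self_apply, mul_comm]
  rw [hfun]
  rfl


lemma vanish : ∀ {k : ℕ} (r : MvPolynomial (Fin k) ℝ),
    (∀ n : Fin k → ℕ, MvPolynomial.eval (fun i => (n i : ℝ)) r = 0) → r = 0 := by
  intro k
  induction k with
  | zero =>
    intro r h
    rw [MvPolynomial.eq_C_of_isEmpty r]
    have h0 := h 0
    rw [MvPolynomial.eq_C_of_isEmpty r, MvPolynomial.eval_C] at h0
    rw [h0, map_zero]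
  | succ k ih =>
    intro r h
    have key : ∀ j, (MvPolynomial.finSuccEquiv ℝ k r).coeff j = 0 := by
      intro j
      apply ih
      intro n
      have hu : Polynomial.map (MvPolynomial.eval (fun i => (n i : ℝ)))
          (MvPolynomial.finSuccEquiv ℝ k r) = 0 := by
        apply Polynomial.eq_zero_of_infinite_isRoot
        refine Set.Infinite.mono ?_ (Set.infinite_range_of_injective
          (Nat.cast_injective (R := ℝ)))
        rintro x ⟨m, rfl⟩
        show Polynomial.IsRoot _ ((m : ℕ) : ℝ)
        rw [Polynomial.IsRoot, ← MvPolynomial.eval_eq_eval_mv_eval']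
        have hcons : (Fin.cons ((m : ℕ) : ℝ) (fun i => (n i : ℝ)) : Fin (k+1) → ℝ)
            = fun i => ((Fin.cons m n : Fin (k+1) → ℕ) i : ℝ) := by
          funext i
          refine Fin.cases ?_ ?_ i <;> simp
        rw [hcons]
        exact h (Fin.cons m n)
      have := congrArg (fun φ => φ.coeff j) hu
      simpa [Polynomial.coeff_map] using this
    have h0 : MvPolynomial.finSuccEquiv ℝ k r = 0 := Polynomial.ext fun j => by
      rw [key j, Polynomial.coeff_zero]
    have := (MvPolynomial.finSuccEquiv ℝ k).injective
      (by rw [h0, map_zero] : MvPolynomial.finSuccEquiv ℝ k r = MvPolynomial.finSuccEquiv ℝ k 0)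
    exact this

lemma lead_ne_zero {k : ℕ} (q : MvPolynomial (Fin k) ℝ) (hq : q ≠ 0) :
    MvPolynomial.homogeneousComponent q.totalDegree q ≠ 0 := by
  obtain ⟨α, hα, hdeg⟩ := Finset.exists_mem_eq_sup q.support
    (MvPolynomial.support_nonempty.mpr hq) (fun s => s.sum fun _ e => e)
  intro h0
  have hc := congrArg (MvPolynomial.coeff α) h0
  rw [MvPolynomial.coeff_homogeneousComponent, MvPolynomial.coeff_zero] at hc
  have hd : α.degree = q.totalDegree := by
    rw [MvPolynomial.totalDegree, hdeg, Finsupp.degree]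
    rfl
  rw [if_pos hd] at hc
  exact MvPolynomial.mem_support_iff.mp hα hc

end Stmt8Aux


/-- Let `p, q ∈ ℝ[t₁,…,t_ℓ]` be polynomials such that `p(n̄) ≥ 0` and `q(n̄) ≥ 0` for
all sufficiently large `n̄ ∈ ℕ^ℓ`, and `p ≃ q`: there are `c̄, c̄' ∈ ℕ^ℓ` with `p(n̄) ≤ q(n̄ + c̄)`
and `q(n̄) ≤ p(n̄ + c̄')` for all sufficiently large `n̄ ∈ ℕ^ℓ`.  Then `p` and `q` have the same
leading homogeneous component (the homogeneous part of highest total degree). -/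
theorem stmt_8 {ℓ : ℕ} (p q : MvPolynomial (Fin ℓ) ℝ)
    (hp : ∃ N : ℕ, ∀ n : Fin ℓ → ℕ, (∀ i, N ≤ n i) →
      0 ≤ MvPolynomial.eval (fun i => (n i : ℝ)) p)
    (hq : ∃ N : ℕ, ∀ n : Fin ℓ → ℕ, (∀ i, N ≤ n i) →
      0 ≤ MvPolynomial.eval (fun i => (n i : ℝ)) q)
    (hpq : ∃ (c : Fin ℓ → ℕ) (N : ℕ), ∀ n : Fin ℓ → ℕ, (∀ i, N ≤ n i) →
      MvPolynomial.eval (fun i => (n i : ℝ)) p ≤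
        MvPolynomial.eval (fun i => ((n i + c i : ℕ) : ℝ)) q)
    (hqp : ∃ (c : Fin ℓ → ℕ) (N : ℕ), ∀ n : Fin ℓ → ℕ, (∀ i, N ≤ n i) →
      MvPolynomial.eval (fun i => (n i : ℝ)) q ≤
        MvPolynomial.eval (fun i => ((n i + c i : ℕ) : ℝ)) p) :
    MvPolynomial.homogeneousComponent p.totalDegree p =
      MvPolynomial.homogeneousComponent q.totalDegree q := by
  classical
  clear hp hq
  obtain ⟨c, N₁, h₁⟩ := hpq
  obtain ⟨c', N₂, h₂⟩ := hqp
  set D := max p.totalDegree q.totalDegree with hD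
  have hpD : p.totalDegree ≤ D := le_max_left _ _
  have hqD : q.totalDegree ≤ D := le_max_right _ _
  set N := max N₁ N₂ with hN
  have key : ∀ a : Fin ℓ → ℕ,
      MvPolynomial.eval (fun i => (a i : ℝ)) (MvPolynomial.homogeneousComponent D p)
        = MvPolynomial.eval (fun i => (a i : ℝ)) (MvPolynomial.homogeneousComponent D q) := by
    intro a
    have dir1 : MvPolynomial.eval (fun i => (a i : ℝ)) (MvPolynomial.homogeneousComponent D p)
        ≤ MvPolynomial.eval (fun i => (a i : ℝ)) (MvPolynomial.homogeneousComponent D q) := by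
      have hcmp := Stmt8Aux.coeff_le_coeff
        (MvPolynomial.aeval (fun i => Polynomial.C ((a i : ℝ)) * Polynomial.X
          + Polynomial.C ((N : ℝ))) p)
        (MvPolynomial.aeval (fun i => Polynomial.C ((a i : ℝ)) * Polynomial.X
          + Polynomial.C (((N + c i : ℕ) : ℝ))) q)
        D 0
        ((Stmt8Aux.natDegree_subst_le p _ _).trans hpD)
        ((Stmt8Aux.natDegree_subst_le q _ _).trans hqD)
        (by
          intro m _
          rw [Stmt8Aux.eval_subst, Stmt8Aux.eval_subst]
          have e1 : (fun i => ((a i : ℝ)) * (m : ℝ) + ((N : ℝ)))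
              = fun i => (((m * a i + N : ℕ)) : ℝ) := by
            funext i; push_cast; ring
          have e2 : (fun i => ((a i : ℝ)) * (m : ℝ) + (((N + c i : ℕ)) : ℝ))
              = fun i => ((((m * a i + N) + c i : ℕ)) : ℝ) := by
            funext i; push_cast; ring
          rw [e1, e2]
          exact h₁ (fun i => m * a i + N)
            (fun i => le_trans (le_max_left N₁ N₂) (Nat.le_add_left N _)))
      rwa [Stmt8Aux.coeff_subst p _ _ D hpD, Stmt8Aux.coeff_subst q _ _ D hqD] at hcmp
    have dir2 : MvPolynomial.eval (fun i => (a i : ℝ)) (MvPolynomial.homogeneousComponent D q)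
        ≤ MvPolynomial.eval (fun i => (a i : ℝ)) (MvPolynomial.homogeneousComponent D p) := by
      have hcmp := Stmt8Aux.coeff_le_coeff
        (MvPolynomial.aeval (fun i => Polynomial.C ((a i : ℝ)) * Polynomial.X
          + Polynomial.C ((N : ℝ))) q)
        (MvPolynomial.aeval (fun i => Polynomial.C ((a i : ℝ)) * Polynomial.X
          + Polynomial.C (((N + c' i : ℕ) : ℝ))) p)
        D 0
        ((Stmt8Aux.natDegree_subst_le q _ _).trans hqD)
        ((Stmt8Aux.natDegree_subst_le p _ _).trans hpD)
        (by
          intro m _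
          rw [Stmt8Aux.eval_subst, Stmt8Aux.eval_subst]
          have e1 : (fun i => ((a i : ℝ)) * (m : ℝ) + ((N : ℝ)))
              = fun i => (((m * a i + N : ℕ)) : ℝ) := by
            funext i; push_cast; ring
          have e2 : (fun i => ((a i : ℝ)) * (m : ℝ) + (((N + c' i : ℕ)) : ℝ))
              = fun i => ((((m * a i + N) + c' i : ℕ)) : ℝ) := by
            funext i; push_cast; ring
          rw [e1, e2]
          exact h₂ (fun i => m * a i + N)
            (fun i => le_trans (le_max_right N₁ N₂) (Nat.le_add_left N _)))
      rwa [Stmt8Aux.coeff_subst q _ _ D hqD, Stmt8Aux.coeff_subst p _ _ D hpD] at hcmp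
    exact le_antisymm dir1 dir2
  have hDeq : MvPolynomial.homogeneousComponent D p = MvPolynomial.homogeneousComponent D q := by
    have hv := Stmt8Aux.vanish
      (MvPolynomial.homogeneousComponent D p - MvPolynomial.homogeneousComponent D q)
      (fun n => by rw [map_sub, key n, sub_self])
    exact sub_eq_zero.mp hv
  by_cases hp0 : p = 0
  · by_cases hq0 : q = 0
    · rw [hp0, hq0]
    · exfalso
      have hD' : D = q.totalDegree := by
        rw [hD, hp0, MvPolynomial.totalDegree_zero, Nat.max_eq_right (Nat.zero_le _)]
      rw [hp0, map_zero, hD'] at hDeq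
      exact Stmt8Aux.lead_ne_zero q hq0 hDeq.symm
  · by_cases hq0 : q = 0
    · exfalso
      have hD' : D = p.totalDegree := by
        rw [hD, hq0, MvPolynomial.totalDegree_zero, Nat.max_eq_left (Nat.zero_le _)]
      rw [hq0, map_zero, hD'] at hDeq
      exact Stmt8Aux.lead_ne_zero p hp0 hDeq
    · have hdeg : p.totalDegree = q.totalDegree := by
        by_contra hne
        rcases Nat.lt_or_ge p.totalDegree q.totalDegree with hlt | hge
        · have hD' : D = q.totalDegree := max_eq_right hlt.le
          have hz : MvPolynomial.homogeneousComponent D p = 0 :=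
            MvPolynomial.homogeneousComponent_eq_zero D p (by rw [hD']; exact hlt)
          rw [hz, hD'] at hDeq
          exact Stmt8Aux.lead_ne_zero q hq0 hDeq.symm
        · have hlt : q.totalDegree < p.totalDegree := lt_of_le_of_ne hge (Ne.symm hne)
          have hD' : D = p.totalDegree := max_eq_left hlt.le
          have hz : MvPolynomial.homogeneousComponent D q = 0 :=
            MvPolynomial.homogeneousComponent_eq_zero D q (by rw [hD']; exact hlt)
          rw [hz, hD'] at hDeq
          exact Stmt8Aux.lead_ne_zero p hp0 hDeq
      have hDp : D = p.totalDegree := by rw [hD, hdeg, max_self]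
      have hDq : D = q.totalDegree := hDp.trans hdeg
      rw [← hDp, ← hDq]
      exact hDeq
end

section
/- Let R be a Noetherian commutative ring with unity, λ a length function on R-modules, S = R[x₁,…,x_k], and A a λ_S-small S-module. Then the annihilator Ann_R(A) = {r ∈ R : r·A = 0} is a λ-cofinite ideal of R, i.e. λ(R/Ann_R(A)) < ∞. -/
open scoped ENNReal

section Aux
variable {R : Type} [CommRing R]

lemma l_mono (L : LengthFunction R) {M : Type} [AddCommGroup M] [Module R M]
    (N : Submodule R M) : L.l N ≤ L.l M := by
  rw [L.l_add M N]; exact le_self_add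

lemma l_prod (L : LengthFunction R) (M N : Type) [AddCommGroup M] [Module R M]
    [AddCommGroup N] [Module R N] : L.l (M × N) = L.l M + L.l N := by
  have h1 : L.l (Submodule.fst R M N) = L.l M := L.l_congr _ _ (Submodule.fstEquiv R M N)
  have h2 : L.l ((M × N) ⧸ Submodule.fst R M N) = L.l N := by
    refine L.l_congr _ _ ?_
    have heq : Submodule.fst R M N = LinearMap.ker (LinearMap.snd R M N) := by
      ext x; simp [Submodule.fst, LinearMap.mem_ker]
    have e1 : ((M × N) ⧸ Submodule.fst R M N) ≃ₗ[R]
        ((M × N) ⧸ LinearMap.ker (LinearMap.snd R M N)) := Submodule.quotEquivOfEq _ _ heq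
    have e2 : ((M × N) ⧸ LinearMap.ker (LinearMap.snd R M N)) ≃ₗ[R] N :=
      (LinearMap.snd R M N).quotKerEquivOfSurjective Prod.snd_surjective
    exact e1.trans e2
  rw [L.l_add (M × N) (Submodule.fst R M N), h1, h2]

def piSuccEquiv (n : ℕ) (M : Type) [AddCommGroup M] [Module R M] :
    (Fin (n+1) → M) ≃ₗ[R] M × (Fin n → M) where
  toFun v := (v 0, fun i => v i.succ)
  invFun p := Fin.cons p.1 p.2
  map_add' _ _ := rfl
  map_smul' _ _ := rfl
  left_inv v := Fin.cons_self_tail v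
  right_inv p := by simp

lemma l_pi (L : LengthFunction R) (n : ℕ) (M : Type) [AddCommGroup M] [Module R M]
    (h : L.l M < ⊤) : L.l (Fin n → M) < ⊤ := by
  induction n with
  | zero => rw [L.l_zero _ (by infer_instance)]; exact ENNReal.zero_lt_top
  | succ n ih =>
    rw [L.l_congr _ _ (piSuccEquiv n M), l_prod]
    exact ENNReal.add_lt_top.mpr ⟨h, ih⟩

end Aux

/-- Let `R` be a Noetherian commutative ring, `λ` a length function on `R`-modules,
`S = R[x₁,…,x_k]`, and `A` a λ_S-small `S`-module (finitely generated over `S` and locally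
λ_R-finite).  Then the annihilator `Ann_R(A) = {r ∈ R : r·A = 0}` is a λ-cofinite ideal of `R`,
i.e. `λ(R / Ann_R(A)) < ∞`. -/
theorem stmt_16 {R : Type} [CommRing R] [IsNoetherianRing R] {k : ℕ} (L : LengthFunction R)
    {A : Type} [AddCommGroup A] [Module R A]
    [Module (MvPolynomial (Fin k) R) A] [IsScalarTower R (MvPolynomial (Fin k) R) A]
    (hfg : Module.Finite (MvPolynomial (Fin k) R) A)
    (hloc : ∀ V : Submodule R A, V.FG → L.l V < ⊤) :
    L.l (R ⧸ Module.annihilator R A) < ⊤ := by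

  classical
  obtain ⟨s, hs⟩ := hfg.fg_top
  set S := MvPolynomial (Fin k) R
  set n := s.card
  set g : Fin n → A := fun i => (s.equivFin.symm i : A)
  set V : Submodule R A := Submodule.span R (s : Set A) with hV
  have hVfg : V.FG := ⟨s, rfl⟩
  have hgV : ∀ i, g i ∈ V := fun i => Submodule.subset_span (s.equivFin.symm i).2
  set φ : R →ₗ[R] (Fin n → V) :=
    LinearMap.pi (fun i => LinearMap.toSpanSingleton R V ⟨g i, hgV i⟩) with hφ
  have hker : LinearMap.ker φ = (Module.annihilator R A : Submodule R R) := by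
    ext r
    simp only [LinearMap.mem_ker, Module.mem_annihilator]
    constructor
    · intro h a
      have hmem : a ∈ Submodule.span S (s : Set A) := by rw [hs]; trivial
      induction hmem using Submodule.span_induction with
      | mem x hx =>
        have : r • g (s.equivFin ⟨x, hx⟩) = 0 := by
          have := congrFun h (s.equivFin ⟨x, hx⟩)
          exact Subtype.ext_iff.mp this
        simpa [g] using this
      | zero => simp
      | add x y _ _ hx hy => rw [smul_add, hx, hy, add_zero]
      | smul p x _ hx => rw [smul_comm, hx, smul_zero]
    · intro h
      funext i
      exact Subtype.ext (h (g i))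
  have e1 : (R ⧸ Module.annihilator R A) ≃ₗ[R] (R ⧸ LinearMap.ker φ) :=
    Submodule.quotEquivOfEq _ _ hker.symm
  have e2 : (R ⧸ LinearMap.ker φ) ≃ₗ[R] LinearMap.range φ := LinearMap.quotKerEquivRange φ
  rw [L.l_congr _ _ (e1.trans e2)]
  calc L.l (LinearMap.range φ) ≤ L.l (Fin n → V) := l_mono L _
    _ < ⊤ := l_pi L n V (hloc V hVfg)
end
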